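/- arXiv:math/0307085 — 4 statements merged into one kernel-verified Lean document; each statement's English description precedes it below -/
import Mathlib

section
/- For every k ∈ I and all i, j ∈ I, the linear operators on the Fock space F(Λ_k) satisfy T_j⁺ ∘ E_i = q^{s_j a_{ji}} · (E_i ∘ T_j⁺) and T_d ∘ E_i = q^{δ_{0,i}} · (E_i ∘ T_d). -/
open scoped Classical

noncomputable section

/-- The base field `ℚ(q)`. -/
abbrev Kq : Type := RatFunc ℚ

/-- The indeterminate `q` of `ℚ(q)`. -/
def fq : Kq := RatFunc.X

/-- The generalized Cartan matrix of affine type `C_n^{(1)}` (meaningful for `i, j ≤ n`). -/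
def cartan (n i j : ℕ) : ℤ :=
  if i = j then 2
  else if i = 1 ∧ j = 0 then -2
  else if i = n - 1 ∧ j = n then -2
  else if i + 1 = j ∨ j + 1 = i then -1
  else 0

/-- The symmetrizing integers: `s 0 = s n = 2`, otherwise `1`. -/
def sg (n i : ℕ) : ℕ := if i = 0 ∨ i = n then 2 else 1

/-- `q_i = q ^ s_i`. -/
def qi (n i : ℕ) : Kq := fq ^ sg n i

/-- The colour of the site `(l, z)`: the unique `i ∈ {0,…,n}` with
`l + z ≡ i` or `-i (mod 2n)`. -/
def colour (n l : ℕ) (z : ℤ) : ℕ :=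
  let r := (((l : ℤ) + z) % (2 * (n : ℤ))).toNat
  if r ≤ n then r else 2 * n - r

/-- A Young diagram of charge `k`: a nondecreasing sequence of integers eventually
equal to `k`. -/
structure YD (n k : ℕ) where
  y : ℕ → ℤ
  mono : Monotone y
  eventually : ∃ N, ∀ l, N ≤ l → y l = (k : ℤ)

variable {n k : ℕ}

/-- `Y` has a concave corner at site `(l, z)`. -/
def ConcaveAt (Y : YD n k) (l : ℕ) (z : ℤ) : Prop :=
  (l = 0 ∧ z = Y.y 0) ∨ (∃ m, l = m + 1 ∧ Y.y m < Y.y (m + 1) ∧ z = Y.y (m + 1))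

/-- `Y` has a convex corner at site `(l, z)`. -/
def ConvexAt (Y : YD n k) (l : ℕ) (z : ℤ) : Prop :=
  ∃ m, l = m + 1 ∧ Y.y m < Y.y (m + 1) ∧ z = Y.y m

/-- The number of `i`-coloured concave corners of `Y`. -/
def cc (i : ℕ) (Y : YD n k) : ℕ :=
  {p : ℕ × ℤ | ConcaveAt Y p.1 p.2 ∧ colour n p.1 p.2 = i}.ncard

/-- The number of `i`-coloured convex corners of `Y`. -/
def cx (i : ℕ) (Y : YD n k) : ℕ :=
  {p : ℕ × ℤ | ConvexAt Y p.1 p.2 ∧ colour n p.1 p.2 = i}.ncard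

/-- The number of `j`-coloured boxes of `Y`. -/
def boxes (j : ℕ) (Y : YD n k) : ℕ :=
  {p : ℕ × ℤ | Y.y p.1 < p.2 ∧ p.2 ≤ (k : ℤ) ∧ colour n p.1 p.2 = j}.ncard

/-- Removing the convex corner of `Y` at site `(l, z)`. -/
def removeY (Y : YD n k) (l : ℕ) (z : ℤ) (h : ConvexAt Y l z) : YD n k where
  y := Function.update Y.y (l - 1) (Y.y (l - 1) + 1)
  mono := by
    obtain ⟨m, rfl, hlt, -⟩ := h
    simp only [Nat.add_sub_cancel]
    apply monotone_nat_of_le_succ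
    intro r
    rcases eq_or_ne r m with rfl | h1
    · rw [Function.update_self, Function.update_of_ne (by omega)]
      omega
    · rcases eq_or_ne (r + 1) m with h2 | h2
      · rw [Function.update_of_ne h1, h2, Function.update_self]
        have hm := Y.mono (Nat.le_add_right r 1)
        rw [h2] at hm
        omega
      · rw [Function.update_of_ne h1, Function.update_of_ne h2]
        exact Y.mono (Nat.le_add_right r 1)
  eventually := by
    obtain ⟨N, hN⟩ := Y.eventually
    exact ⟨N + l + 1, fun r hr => by
      rw [Function.update_of_ne (by omega)]
      exact hN r (by omega)⟩

/-- Adding a box at the concave corner of `Y` at site `(l, z)`. -/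
def addY (Y : YD n k) (l : ℕ) (z : ℤ) (h : ConcaveAt Y l z) : YD n k where
  y := Function.update Y.y l (Y.y l - 1)
  mono := by
    apply monotone_nat_of_le_succ
    intro r
    rcases eq_or_ne r l with rfl | h1
    · rw [Function.update_self, Function.update_of_ne (by omega)]
      have := Y.mono (Nat.le_add_right r 1)
      omega
    · rcases eq_or_ne (r + 1) l with h2 | h2
      · rw [Function.update_of_ne h1, h2, Function.update_self]
        rcases h with ⟨hl0, -⟩ | ⟨m, hm, hlt, -⟩
        · omega
        · have hrm : r = m := by omega
          subst hrm
          rw [← hm] at hlt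
          omega
      · rw [Function.update_of_ne h1, Function.update_of_ne h2]
        exact Y.mono (Nat.le_add_right r 1)
  eventually := by
    obtain ⟨N, hN⟩ := Y.eventually
    exact ⟨N + l + 1, fun r hr => by
      rw [Function.update_of_ne (by omega)]
      exact hN r (by omega)⟩

/-- The Fock space `F(Λ_k)`: the `ℚ(q)`-vector space with basis the Young diagrams of
charge `k`. -/
abbrev Fock (n k : ℕ) := YD n k →₀ Kq

/-- The basis vector of the Fock space corresponding to a Young diagram. -/
def fockB (Y : YD n k) : Fock n k := Finsupp.single Y 1

/-- The linear operator on the Fock space determined by its values on basis vectors. -/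
def lift (g : YD n k → Fock n k) : Fock n k →ₗ[Kq] Fock n k :=
  Finsupp.lsum Kq fun Y => LinearMap.toSpanSingleton Kq (Fock n k) (g Y)

/-- The single-site operator `E_{(l,z)}`. -/
def Esite (n k : ℕ) (l : ℕ) (z : ℤ) : Fock n k →ₗ[Kq] Fock n k :=
  lift fun Y => if h : ConvexAt Y l z then fockB (removeY Y l z h) else 0

/-- The single-site operator `F_{(l,z)}`. -/
def Fsite (n k : ℕ) (l : ℕ) (z : ℤ) : Fock n k →ₗ[Kq] Fock n k :=
  lift fun Y => if h : ConcaveAt Y l z then fockB (addY Y l z h) else 0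

/-- `a(i,l,z,Y)`: the number of `i`-coloured concave corners at sites greater than `(l,z)`
minus the number of `i`-coloured convex corners at sites greater than `(l,z)`. -/
def aExp (i l : ℕ) (z : ℤ) (Y : YD n k) : ℤ :=
  ({p : ℕ × ℤ | ConcaveAt Y p.1 p.2 ∧ colour n p.1 p.2 = i ∧
      (l : ℤ) + z < (p.1 : ℤ) + p.2}.ncard : ℤ)
  - ({p : ℕ × ℤ | ConvexAt Y p.1 p.2 ∧ colour n p.1 p.2 = i ∧
      (l : ℤ) + z < (p.1 : ℤ) + p.2}.ncard : ℤ)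

/-- `b(i,l,z,Y)`: the number of `i`-coloured convex corners at sites smaller than `(l,z)`
minus the number of `i`-coloured concave corners at sites smaller than `(l,z)`. -/
def bExp (i l : ℕ) (z : ℤ) (Y : YD n k) : ℤ :=
  ({p : ℕ × ℤ | ConvexAt Y p.1 p.2 ∧ colour n p.1 p.2 = i ∧
      (p.1 : ℤ) + p.2 < (l : ℤ) + z}.ncard : ℤ)
  - ({p : ℕ × ℤ | ConcaveAt Y p.1 p.2 ∧ colour n p.1 p.2 = i ∧
      (p.1 : ℤ) + p.2 < (l : ℤ) + z}.ncard : ℤ)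

/-- The Chevalley-type operator `E_i` on the Fock space: on a basis diagram `Y`,
`E_i Y = Σ_{(l,z) : i-coloured convex corner of Y} q_i^{a(i,l,z,Y)} • (Y with corner removed)`,
where the power of `q_i` records the product of the `T⁺` factors at larger `i`-coloured sites. -/
def Ei (n k i : ℕ) : Fock n k →ₗ[Kq] Fock n k :=
  lift fun Y => ∑ᶠ p : ℕ × ℤ,
    if h : ConvexAt Y p.1 p.2 ∧ colour n p.1 p.2 = i then
      (qi n i ^ aExp i p.1 p.2 Y) • fockB (removeY Y p.1 p.2 h.1)
    else 0

/-- The Chevalley-type operator `F_i` on the Fock space: on a basis diagram `Y`,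
`F_i Y = Σ_{(l,z) : i-coloured concave corner of Y} q_i^{b(i,l,z,Y)} • (Y with box added)`,
where the power of `q_i` records the product of the `T⁻` factors at smaller `i`-coloured sites. -/
def Fi (n k i : ℕ) : Fock n k →ₗ[Kq] Fock n k :=
  lift fun Y => ∑ᶠ p : ℕ × ℤ,
    if h : ConcaveAt Y p.1 p.2 ∧ colour n p.1 p.2 = i then
      (qi n i ^ bExp i p.1 p.2 Y) • fockB (addY Y p.1 p.2 h.1)
    else 0

/-- The operator `T_i⁺ = ∏_{(l,z) of colour i} T⁺_{(l,z)}`: it multiplies a basis diagram `Y`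
by `q_i^{cc_i(Y) - cx_i(Y)}`. -/
def Tplus (n k i : ℕ) : Fock n k →ₗ[Kq] Fock n k :=
  lift fun Y => (qi n i ^ ((cc i Y : ℤ) - (cx i Y : ℤ))) • fockB Y

/-- The operator `T_i⁻ = ∏_{(l,z) of colour i} T⁻_{(l,z)}`: it multiplies a basis diagram `Y`
by `q_i^{-(cc_i(Y) - cx_i(Y))}`. -/
def Tminus (n k i : ℕ) : Fock n k →ₗ[Kq] Fock n k :=
  lift fun Y => (qi n i ^ (-((cc i Y : ℤ) - (cx i Y : ℤ)))) • fockB Y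

/-- The operator `T_d`: it multiplies a basis diagram `Y` by `q^{-b_0(Y)}`. -/
def Td (n k : ℕ) : Fock n k →ₗ[Kq] Fock n k :=
  lift fun Y => (fq ^ (-(boxes 0 Y : ℤ))) • fockB Y

/-- The quantum integer `[m]_x = (x^m - x^{-m})/(x - x^{-1})`. -/
def qInt (x : Kq) (m : ℕ) : Kq := (x ^ m - x⁻¹ ^ m) / (x - x⁻¹)

/-- The quantum factorial `[m]_x!`. -/
def qFact (x : Kq) : ℕ → Kq
  | 0 => 1
  | m + 1 => qInt x (m + 1) * qFact x m

/-- The quantum binomial coefficient `[m choose r]_x`. -/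
def qBinom (x : Kq) (m r : ℕ) : Kq := qFact x m / (qFact x r * qFact x (m - r))

/-- The empty Young diagram `φ_k` of charge `k`. -/
def phiYD (n k : ℕ) : YD n k :=
  ⟨fun _ => (k : ℤ), monotone_const, ⟨0, fun _ _ => rfl⟩⟩

/-- `Y` has an (either concave or convex) corner at site `(l, z)`. -/
def CornerAt (Y : YD n k) (l : ℕ) (z : ℤ) : Prop := ConcaveAt Y l z ∨ ConvexAt Y l z

/-- `L` lists the sites of the `i`-coloured corners of `Y` in strictly decreasing order. -/
def Enumerates (Y : YD n k) (i : ℕ) (L : List (ℕ × ℤ)) : Prop :=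
  (∀ p : ℕ × ℤ, p ∈ L ↔ (CornerAt Y p.1 p.2 ∧ colour n p.1 p.2 = i)) ∧
  L.Chain' (fun p q => (q.1 : ℤ) + q.2 < (p.1 : ℤ) + p.2)

/-- The `i`-signature of `Y` along the list `L` of its `i`-coloured corner sites:
each site is tagged `true` if the corner there is convex (`σ = 1`) and `false`
if it is concave (`σ = 0`). -/
def sigL (Y : YD n k) (L : List (ℕ × ℤ)) : List ((ℕ × ℤ) × Bool) :=
  L.map fun p => (p, if ConvexAt Y p.1 p.2 then true else false)

/-- Reduction of a signature: repeatedly delete adjacent pairs `(0, 1)` (a concave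
entry immediately followed by a convex entry); the surviving entries are those
indexed by `J(σ)`. -/
def reduceSig : List ((ℕ × ℤ) × Bool) → List ((ℕ × ℤ) × Bool) :=
  List.foldr (fun x acc =>
    if x.2 = false ∧ acc.head?.map Prod.snd = some true then acc.tail else x :: acc) []

/-- The site at which `f̃_i` adds a box: the corner of the smallest index `r ∈ J(σ)`
with `σ_r = 0` (`none` if there is no such index, i.e. `f̃_i Y = 0`). -/
def ftildeSite (Y : YD n k) (i : ℕ) (L : List (ℕ × ℤ)) : Option (ℕ × ℤ) :=
  ((reduceSig (sigL Y L)).find? (fun x => !x.2)).map Prod.fst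

/-- The site at which `ẽ_i` removes a box: the corner of the largest index `r ∈ J(σ)`
with `σ_r = 1` (`none` if there is no such index, i.e. `ẽ_i Y = 0`). -/
def etildeSite (Y : YD n k) (i : ℕ) (L : List (ℕ × ℤ)) : Option (ℕ × ℤ) :=
  (((reduceSig (sigL Y L)).filter (fun x => x.2)).getLast?).map Prod.fst

/-- Colour as a function of `l + z` only. -/
def cfun (n : ℕ) (t : ℤ) : ℕ :=
  if (t % (2 * (n : ℤ))).toNat ≤ n then (t % (2 * (n : ℤ))).toNat
  else 2 * n - (t % (2 * (n : ℤ))).toNat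

lemma colour_eq (n l : ℕ) (z : ℤ) : colour n l z = cfun n ((l : ℤ) + z) := by
  simp only [colour, cfun]

set_option maxHeartbeats 2000000 in
lemma key_colour (hn : 2 ≤ n) (j : ℕ) (hj : j ≤ n) (t : ℤ) :
    2 * (if cfun n t = j then (1 : ℤ) else 0) - (if cfun n (t + 1) = j then 1 else 0)
      - (if cfun n (t - 1) = j then 1 else 0) = cartan n j (cfun n t) := by
  have h2n : (0 : ℤ) < 2 * n := by positivity
  obtain ⟨r, hr0⟩ : ∃ r : ℕ, t % (2 * (n : ℤ)) = (r : ℤ) :=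
    ⟨_, (Int.toNat_of_nonneg (Int.emod_nonneg t (by omega))).symm⟩
  have hrlt : (r : ℤ) < 2 * n := hr0 ▸ Int.emod_lt_of_pos t h2n
  have hrltn : r < 2 * n := by omega
  have hdiv := Int.mul_ediv_add_emod t (2 * (n : ℤ))
  rw [hr0] at hdiv
  have e0 : (t % (2 * (n : ℤ))).toNat = r := by rw [hr0]; exact Int.toNat_natCast r
  have e1 : ((t + 1) % (2 * (n : ℤ))).toNat = if r = 2 * n - 1 then 0 else r + 1 := by
    rcases eq_or_ne r (2 * n - 1) with h | h
    · have hrz : (r : ℤ) = 2 * n - 1 := by omega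
      have ht : t + 1 = 2 * (n : ℤ) * (t / (2 * n) + 1) := by linarith
      rw [ht, Int.mul_emod_right, if_pos h]
      rfl
    · have ht : t + 1 = ((r : ℤ) + 1) + 2 * (n : ℤ) * (t / (2 * n)) := by linarith
      rw [ht, Int.add_mul_emod_self_left, Int.emod_eq_of_lt (by positivity) (by omega),
        if_neg h]
      omega
  have e2 : ((t - 1) % (2 * (n : ℤ))).toNat = if r = 0 then 2 * n - 1 else r - 1 := by
    rcases eq_or_ne r 0 with h | h
    · have hrz : (r : ℤ) = 0 := by omega
      have ht : t - 1 = (2 * (n : ℤ) - 1) + 2 * (n : ℤ) * (t / (2 * n) - 1) := by linarith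
      rw [ht, Int.add_mul_emod_self_left, Int.emod_eq_of_lt (by omega) (by omega), if_pos h]
      omega
    · have ht : t - 1 = ((r : ℤ) - 1) + 2 * (n : ℤ) * (t / (2 * n)) := by linarith
      rw [ht, Int.add_mul_emod_self_left, Int.emod_eq_of_lt (by omega) (by omega), if_neg h]
      omega
  have hn1 : ¬ (2*n - 1 ≤ n) := by omega
  rcases eq_or_ne r 0 with h0 | h0
  · have hC0 : cfun n t = 0 := by simp only [cfun, e0, h0]; split_ifs <;> (try contradiction) <;> omega
    have hC1 : cfun n (t+1) = 1 := by simp only [cfun, e1, h0]; split_ifs <;> (try contradiction) <;> omega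
    have hC2 : cfun n (t-1) = 1 := by simp only [cfun, e2, h0]; split_ifs <;> (try contradiction) <;> omega
    rw [hC0, hC1, hC2]; simp only [cartan, eq_self_iff_true, and_true, true_and, and_false, false_and, or_false, false_or, or_true, true_or, Nat.succ_ne_zero]; split_ifs <;> (try contradiction) <;> omega
  · rcases eq_or_ne r (2*n-1) with h1 | h1
    · have hC0 : cfun n t = 1 := by simp only [cfun, e0, h1]; split_ifs <;> (try contradiction) <;> omega
      have hC1 : cfun n (t+1) = 0 := by simp only [cfun, e1]; split_ifs <;> (try contradiction) <;> omega
      have hC2 : cfun n (t-1) = 2 := by simp only [cfun, e2, h1]; split_ifs <;> (try contradiction) <;> omega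
      rw [hC0, hC1, hC2]; simp only [cartan, eq_self_iff_true, and_true, true_and, and_false, false_and, or_false, false_or, or_true, true_or, Nat.succ_ne_zero]; split_ifs <;> (try contradiction) <;> omega
    · rcases lt_trichotomy r n with h2 | h2 | h2
      · have hC0 : cfun n t = r := by simp only [cfun, e0]; split_ifs <;> (try contradiction) <;> omega
        have hC1 : cfun n (t+1) = r + 1 := by simp only [cfun, e1]; split_ifs <;> (try contradiction) <;> omega
        have hC2 : cfun n (t-1) = r - 1 := by simp only [cfun, e2]; split_ifs <;> (try contradiction) <;> omega
        rw [hC0, hC1, hC2]; simp only [cartan, eq_self_iff_true, and_true, true_and, and_false, false_and, or_false, false_or, or_true, true_or, Nat.succ_ne_zero]; split_ifs <;> (try contradiction) <;> omega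
      · have hC0 : cfun n t = n := by simp only [cfun, e0]; split_ifs <;> (try contradiction) <;> omega
        have hC1 : cfun n (t+1) = n - 1 := by simp only [cfun, e1]; split_ifs <;> (try contradiction) <;> omega
        have hC2 : cfun n (t-1) = n - 1 := by simp only [cfun, e2]; split_ifs <;> (try contradiction) <;> omega
        rw [hC0, hC1, hC2]; simp only [cartan, eq_self_iff_true, and_true, true_and, and_false, false_and, or_false, false_or, or_true, true_or, Nat.succ_ne_zero]; split_ifs <;> (try contradiction) <;> omega
      · have hC0 : cfun n t = 2*n - r := by simp only [cfun, e0]; split_ifs <;> (try contradiction) <;> omega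
        have hC1 : cfun n (t+1) = 2*n - r - 1 := by simp only [cfun, e1]; split_ifs <;> (try contradiction) <;> omega
        have hC2 : cfun n (t-1) = 2*n - r + 1 := by simp only [cfun, e2]; split_ifs <;> (try contradiction) <;> omega
        rw [hC0, hC1, hC2]; simp only [cartan, eq_self_iff_true, and_true, true_and, and_false, false_and, or_false, false_or, or_true, true_or, Nat.succ_ne_zero]; split_ifs <;> (try contradiction) <;> omega

lemma lift_single (g : YD n k → Fock n k) (Y : YD n k) : lift g (fockB Y) = g Y := by
  simp [lift, fockB, Finsupp.lsum_single, LinearMap.toSpanSingleton_apply]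

lemma convex_fin (Y : YD n k) : {p : ℕ × ℤ | ConvexAt Y p.1 p.2}.Finite := by
  obtain ⟨N, hN⟩ := Y.eventually
  apply Set.Finite.subset ((Finset.range (N + 2) ×ˢ Finset.Icc (Y.y 0) (k : ℤ)).finite_toSet)
  rintro ⟨l, z⟩ ⟨m, rfl, hlt, rfl⟩
  simp only [Finset.coe_product, Set.mem_prod, Finset.mem_coe, Finset.mem_range,
    Finset.mem_Icc]
  have h1 : Y.y m ≤ (k : ℤ) := by
    have h2 := Y.mono (Nat.le_add_left m N)
    rw [hN (N + m) (Nat.le_add_right N m)] at h2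
    exact h2
  refine ⟨?_, Y.mono (Nat.zero_le m), h1⟩
  by_contra hc
  push_neg at hc
  rw [hN m (by omega), hN (m + 1) (by omega)] at hlt
  omega

lemma cx_card (Y : YD n k) (j N : ℕ) (hN : ∀ l, N ≤ l → Y.y l = (k : ℤ)) :
    cx j Y = ((Finset.range N).filter
      (fun m => Y.y m < Y.y (m + 1) ∧ colour n (m + 1) (Y.y m) = j)).card := by
  have hset : {p : ℕ × ℤ | ConvexAt Y p.1 p.2 ∧ colour n p.1 p.2 = j}
      = ↑(((Finset.range N).filter
          (fun m => Y.y m < Y.y (m + 1) ∧ colour n (m + 1) (Y.y m) = j)).image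
          (fun m => (m + 1, Y.y m))) := by
    ext ⟨l, z⟩
    simp only [Set.mem_setOf_eq, Finset.coe_image, Set.mem_image, Finset.mem_coe,
      Finset.mem_filter, Finset.mem_range]
    constructor
    · rintro ⟨⟨m, rfl, hlt, rfl⟩, hcol⟩
      refine ⟨m, ⟨?_, hlt, hcol⟩, rfl⟩
      by_contra hc
      push_neg at hc
      rw [hN m (by omega), hN (m + 1) (by omega)] at hlt
      omega
    · rintro ⟨m, ⟨_, hlt, hcol⟩, heq⟩
      obtain ⟨h1, h2⟩ := Prod.mk.injEq .. ▸ heq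
      exact ⟨⟨m, h1.symm, hlt, h2.symm⟩, by rw [← h1, ← h2]; exact hcol⟩
  rw [cx, hset, Set.ncard_coe_finset,
    Finset.card_image_of_injective _ (fun a b hab => by
      have h := congrArg Prod.fst hab; simp only at h; omega)]

lemma cc_card (Y : YD n k) (j N : ℕ) (hN : ∀ l, N ≤ l → Y.y l = (k : ℤ)) :
    cc j Y = (if colour n 0 (Y.y 0) = j then 1 else 0)
      + ((Finset.range N).filter
        (fun m => Y.y m < Y.y (m + 1) ∧ colour n (m + 1) (Y.y (m + 1)) = j)).card := by
  classical
  set F := ((Finset.range N).filter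
      (fun m => Y.y m < Y.y (m + 1) ∧ colour n (m + 1) (Y.y (m + 1)) = j)).image
      (fun m => ((m + 1 : ℕ), Y.y (m + 1))) with hF
  have hset : {p : ℕ × ℤ | ConcaveAt Y p.1 p.2 ∧ colour n p.1 p.2 = j}
      = ↑((if colour n 0 (Y.y 0) = j then {((0 : ℕ), Y.y 0)} else (∅ : Finset (ℕ × ℤ))) ∪ F) := by
    ext ⟨l, z⟩
    simp only [Set.mem_setOf_eq, Finset.coe_union, Set.mem_union, Finset.mem_coe,
      Finset.mem_image, Finset.mem_filter, Finset.mem_range, hF, ConcaveAt]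
    constructor
    · rintro ⟨⟨h0, hz⟩ | ⟨m, rfl, hlt, rfl⟩, hcol⟩
      · subst h0; subst hz
        left
        rw [if_pos hcol]
        simp
      · right
        refine ⟨m, ⟨?_, hlt, hcol⟩, rfl⟩
        by_contra hc
        push_neg at hc
        rw [hN m (by omega), hN (m + 1) (by omega)] at hlt
        omega
    · rintro (hmem | ⟨m, ⟨_, hlt, hcol⟩, heq⟩)
      · by_cases hc : colour n 0 (Y.y 0) = j
        · rw [if_pos hc] at hmem
          simp only [Finset.mem_singleton, Prod.mk.injEq] at hmem
          obtain ⟨h1, h2⟩ := hmem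
          subst h1; subst h2
          exact ⟨Or.inl ⟨rfl, rfl⟩, hc⟩
        · rw [if_neg hc] at hmem
          simp at hmem
      · have h1 : l = m + 1 := (congrArg Prod.fst heq).symm
        have h2 : z = Y.y (m + 1) := (congrArg Prod.snd heq).symm
        subst h1
        refine ⟨Or.inr ⟨m, rfl, hlt, h2⟩, ?_⟩
        rw [h2]; exact hcol
  rw [cc, hset, Set.ncard_coe_finset, Finset.card_union_of_disjoint, Finset.card_image_of_injective]
  · congr 1
    split_ifs <;> simp
  · exact fun a b hab => by have h := congrArg Prod.fst hab; simp only at h; omega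
  · rw [Finset.disjoint_left]
    intro p hp hpF
    simp only [hF, Finset.mem_image, Finset.mem_filter] at hpF
    obtain ⟨m, -, heq⟩ := hpF
    split_ifs at hp with hc
    · simp only [Finset.mem_singleton] at hp
      subst hp
      exact absurd (congrArg Prod.fst heq) (by simp)
    · simp at hp

lemma ccD (Y : YD n k) (j N : ℕ) (hN : ∀ l, N ≤ l → Y.y l = (k : ℤ)) :
    ((cc j Y : ℤ) - cx j Y) = (if colour n 0 (Y.y 0) = j then 1 else 0)
      + ∑ r ∈ Finset.range N,
        ((if Y.y r < Y.y (r + 1) ∧ colour n (r + 1) (Y.y (r + 1)) = j then (1 : ℤ) else 0)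
          - (if Y.y r < Y.y (r + 1) ∧ colour n (r + 1) (Y.y r) = j then 1 else 0)) := by
  rw [cc_card Y j N hN, cx_card Y j N hN, Finset.card_filter, Finset.card_filter,
    Finset.sum_sub_distrib]
  push_cast
  ring

lemma boxes_fin (Y : YD n k) (j : ℕ) :
    {p : ℕ × ℤ | Y.y p.1 < p.2 ∧ p.2 ≤ (k : ℤ) ∧ colour n p.1 p.2 = j}.Finite := by
  obtain ⟨N, hN⟩ := Y.eventually
  apply Set.Finite.subset ((Finset.range N ×ˢ Finset.Icc (Y.y 0) (k : ℤ)).finite_toSet)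
  rintro ⟨l, z⟩ ⟨h1, h2, -⟩
  simp only [Finset.coe_product, Set.mem_prod, Finset.mem_coe, Finset.mem_range, Finset.mem_Icc]
  refine ⟨?_, le_of_lt (lt_of_le_of_lt (Y.mono (Nat.zero_le l)) h1), h2⟩
  by_contra hc
  push_neg at hc
  rw [hN l hc] at h1
  omega

lemma boxes_rem (Y : YD n k) (l : ℕ) (z : ℤ) (h : ConvexAt Y l z) :
    (boxes 0 Y : ℤ) = (if colour n l z = 0 then 1 else 0) + boxes 0 (removeY Y l z h) := by
  obtain ⟨m, hl, hlt, hz⟩ := id h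
  subst hl; subst hz
  set Y' := removeY Y (m + 1) (Y.y m) h with hY'
  have hy' : ∀ r, Y'.y r = Function.update Y.y m (Y.y m + 1) r := fun _ => rfl
  have hcol : colour n m (Y.y m + 1) = colour n (m + 1) (Y.y m) := by
    rw [colour_eq, colour_eq]
    congr 1
    push_cast
    ring
  have hzk : Y.y m + 1 ≤ (k : ℤ) := by
    obtain ⟨N, hN⟩ := Y.eventually
    have h2 := Y.mono (Nat.le_add_left (m + 1) N)
    rw [hN (N + (m + 1)) (Nat.le_add_right N (m + 1))] at h2
    omega
  by_cases hc : colour n (m + 1) (Y.y m) = 0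
  · have hins : {p : ℕ × ℤ | Y.y p.1 < p.2 ∧ p.2 ≤ (k : ℤ) ∧ colour n p.1 p.2 = 0}
        = insert (m, Y.y m + 1)
          {p : ℕ × ℤ | Y'.y p.1 < p.2 ∧ p.2 ≤ (k : ℤ) ∧ colour n p.1 p.2 = 0} := by
      ext ⟨l, z⟩
      simp only [Set.mem_setOf_eq, Set.mem_insert_iff, Prod.mk.injEq, hy']
      rcases eq_or_ne l m with rfl | hlm
      · rw [Function.update_self]
        constructor
        · rintro ⟨h1, h2, h3⟩
          rcases eq_or_ne z (Y.y l + 1) with rfl | hne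
          · exact Or.inl ⟨rfl, rfl⟩
          · exact Or.inr ⟨by omega, h2, h3⟩
        · rintro (⟨-, rfl⟩ | ⟨h1, h2, h3⟩)
          · exact ⟨by omega, hzk, hcol.trans hc⟩
          · exact ⟨by omega, h2, h3⟩
      · rw [Function.update_of_ne hlm]
        constructor
        · exact fun hx => Or.inr hx
        · rintro (⟨rfl, -⟩ | hx)
          · exact absurd rfl hlm
          · exact hx
    rw [boxes, boxes, hins, Set.ncard_insert_of_notMem ?_ (boxes_fin Y' 0), if_pos hc]
    · push_cast; ring
    · intro hmem
      have h1 := hmem.1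
      rw [hy', Function.update_self] at h1
      omega
  · have heqs : {p : ℕ × ℤ | Y.y p.1 < p.2 ∧ p.2 ≤ (k : ℤ) ∧ colour n p.1 p.2 = 0}
        = {p : ℕ × ℤ | Y'.y p.1 < p.2 ∧ p.2 ≤ (k : ℤ) ∧ colour n p.1 p.2 = 0} := by
      ext ⟨l, z⟩
      simp only [Set.mem_setOf_eq, hy']
      rcases eq_or_ne l m with rfl | hlm
      · rw [Function.update_self]
        constructor
        · rintro ⟨h1, h2, h3⟩
          rcases eq_or_ne z (Y.y l + 1) with rfl | hne
          · exact absurd (hcol.symm.trans h3) hc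
          · exact ⟨by omega, h2, h3⟩
        · rintro ⟨h1, h2, h3⟩
          exact ⟨by omega, h2, h3⟩
      · rw [Function.update_of_ne hlm]
    rw [boxes, boxes, heqs, if_neg hc]
    ring


def Gfun (n j : ℕ) (w : ℕ → ℤ) (r : ℕ) : ℤ :=
  (if w r < w (r + 1) ∧ colour n (r + 1) (w (r + 1)) = j then (1 : ℤ) else 0)
    - (if w r < w (r + 1) ∧ colour n (r + 1) (w r) = j then 1 else 0)

lemma ccD' (Y : YD n k) (j N : ℕ) (hN : ∀ l, N ≤ l → Y.y l = (k : ℤ)) :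
    ((cc j Y : ℤ) - cx j Y) = (if colour n 0 (Y.y 0) = j then 1 else 0)
      + ∑ r ∈ Finset.range N, Gfun n j Y.y r := by
  rw [ccD Y j N hN]; rfl

lemma ite_and_left {A B : Prop} [Decidable (A ∧ B)] [Decidable B] (hA : A) :
    (if A ∧ B then (1 : ℤ) else 0) = (if B then 1 else 0) := by
  by_cases hB : B
  · rw [if_pos ⟨hA, hB⟩, if_pos hB]
  · rw [if_neg (fun hh => hB hh.2), if_neg hB]

lemma ite_and_not {A B : Prop} [Decidable (A ∧ B)] (hA : ¬A) :
    (if A ∧ B then (1 : ℤ) else 0) = 0 := by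
  rw [if_neg (fun hh => hA hh.1)]

lemma ite_self_lt {B : Prop} [Decidable B] (x : ℤ) :
    (if x < x ∧ B then (1 : ℤ) else 0) = 0 := ite_and_not (lt_irrefl x)

lemma ite_succ_lt {B : Prop} [Decidable B] (x : ℤ) :
    (if x < x + 1 ∧ B then (1 : ℤ) else 0) = (if B then 1 else 0) :=
  ite_and_left (by omega)

lemma mainlem (hn : 2 ≤ n) (Y Y' : YD n k) (j m : ℕ) (hj : j ≤ n)
    (hlt : Y.y m < Y.y (m + 1))
    (hy' : ∀ r, Y'.y r = Function.update Y.y m (Y.y m + 1) r) :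
    (if colour n 0 (Y'.y 0) = j then (1 : ℤ) else 0)
      + ∑ r ∈ ({m - 1, m} : Finset ℕ), (Gfun n j Y'.y r - Gfun n j Y.y r)
      = cartan n j (colour n (m + 1) (Y.y m))
        + (if colour n 0 (Y.y 0) = j then 1 else 0) := by
  rcases m with _ | m'
  · have hss : ({0 - 1, 0} : Finset ℕ) = {0} := by decide
    rw [hss, Finset.sum_singleton]
    have hv0 : Y'.y 0 = Y.y 0 + 1 := by rw [hy' 0, Function.update_self]
    have hv1 : Y'.y (0 + 1) = Y.y (0 + 1) := by
      rw [hy' (0 + 1), Function.update_of_ne (by omega)]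
    set t : ℤ := ((0 + 1 : ℕ) : ℤ) + Y.y 0 with ht
    have k1 : colour n (0 + 1) (Y.y 0) = cfun n t := by rw [colour_eq]
    have k2 : colour n (0 + 1) (Y.y 0 + 1) = cfun n (t + 1) := by
      rw [colour_eq]; congr 1; omega
    have k3 : colour n 0 (Y.y 0) = cfun n (t - 1) := by
      rw [colour_eq]; congr 1; omega
    have k4 : colour n 0 (Y.y 0 + 1) = cfun n t := by
      rw [colour_eq]; congr 1; omega
    simp only [Gfun, hv0, hv1, k1, k2, k3, k4]
    rcases eq_or_lt_of_le (show Y.y 0 + 1 ≤ Y.y (0 + 1) from hlt) with hbc | hbc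
    · rw [← hbc, k2]
      simp only [ite_self_lt, ite_succ_lt]
      linarith [key_colour hn j hj t]
    · simp only [ite_and_left hbc, ite_and_left hlt]
      linarith [key_colour hn j hj t]
  · have hss : ({m' + 1 - 1, m' + 1} : Finset ℕ) = {m', m' + 1} := rfl
    rw [hss, Finset.sum_pair (by omega : m' ≠ m' + 1)]
    have hv0 : Y'.y 0 = Y.y 0 := by rw [hy' 0, Function.update_of_ne (by omega)]
    have hvm : Y'.y (m' + 1) = Y.y (m' + 1) + 1 := by rw [hy' (m' + 1), Function.update_self]
    have hvm1 : Y'.y (m' + 1 + 1) = Y.y (m' + 1 + 1) := by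
      rw [hy' (m' + 1 + 1), Function.update_of_ne (by omega)]
    have hvm' : Y'.y m' = Y.y m' := by rw [hy' m', Function.update_of_ne (by omega)]
    set t : ℤ := ((m' + 1 + 1 : ℕ) : ℤ) + Y.y (m' + 1) with ht
    have k1 : colour n (m' + 1 + 1) (Y.y (m' + 1)) = cfun n t := by rw [colour_eq]
    have k2 : colour n (m' + 1 + 1) (Y.y (m' + 1) + 1) = cfun n (t + 1) := by
      rw [colour_eq]; congr 1; omega
    have k3 : colour n (m' + 1) (Y.y (m' + 1)) = cfun n (t - 1) := by
      rw [colour_eq]; congr 1; omega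
    have k4 : colour n (m' + 1) (Y.y (m' + 1) + 1) = cfun n t := by
      rw [colour_eq]; congr 1; omega
    have hab : Y.y m' ≤ Y.y (m' + 1) := Y.mono (Nat.le_succ m')
    simp only [Gfun, hv0, hvm, hvm1, hvm', k1, k2, k3, k4]
    rcases eq_or_lt_of_le hab with heq | hablt <;>
      rcases eq_or_lt_of_le (show Y.y (m' + 1) + 1 ≤ Y.y (m' + 1 + 1) from hlt)
        with hbc | hbc
    · rw [← hbc, k2, heq, k3]
      simp only [ite_self_lt, ite_succ_lt]
      linarith [key_colour hn j hj t]
    · rw [heq, k3]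
      simp only [ite_self_lt, ite_succ_lt, ite_and_left hbc,
        ite_and_left (show Y.y (m' + 1) < Y.y (m' + 1 + 1) from hlt)]
      linarith [key_colour hn j hj t]
    · rw [← hbc, k2]
      simp only [ite_self_lt, ite_succ_lt, ite_and_left hablt,
        ite_and_left (show Y.y m' < Y.y (m' + 1) + 1 by omega)]
      linarith [key_colour hn j hj t]
    · simp only [ite_succ_lt, ite_and_left hablt, ite_and_left hbc,
        ite_and_left (show Y.y m' < Y.y (m' + 1) + 1 by omega),
        ite_and_left (show Y.y (m' + 1) < Y.y (m' + 1 + 1) from hlt)]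
      linarith [key_colour hn j hj t]

lemma Dlem (hn : 2 ≤ n) (Y : YD n k) (j : ℕ) (hj : j ≤ n) (l : ℕ) (z : ℤ)
    (h : ConvexAt Y l z) :
    ((cc j (removeY Y l z h) : ℤ) - cx j (removeY Y l z h))
      = cartan n j (colour n l z) + ((cc j Y : ℤ) - cx j Y) := by
  obtain ⟨m, hl, hlt, hz⟩ := id h
  subst hl; subst hz
  set Y' := removeY Y (m + 1) (Y.y m) h with hY'
  have hy' : ∀ r, Y'.y r = Function.update Y.y m (Y.y m + 1) r := fun _ => rfl
  obtain ⟨N0, hN0⟩ := Y.eventually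
  set N := N0 + m + 2 with hNdef
  have hNk : ∀ r, N ≤ r → Y.y r = (k : ℤ) := fun r hr => hN0 r (by omega)
  have hNk' : ∀ r, N ≤ r → Y'.y r = (k : ℤ) := fun r hr => by
    rw [hy', Function.update_of_ne (by omega)]; exact hNk r hr
  rw [ccD' Y j N hNk, ccD' Y' j N hNk']
  have hsub : ({m - 1, m} : Finset ℕ) ⊆ Finset.range N := by
    intro x hx
    simp only [Finset.mem_insert, Finset.mem_singleton] at hx
    simp only [Finset.mem_range]
    omega
  have hvan : ∀ r ∈ Finset.range N, r ∉ ({m - 1, m} : Finset ℕ) →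
      Gfun n j Y'.y r - Gfun n j Y.y r = 0 := by
    intro r _ hr
    simp only [Finset.mem_insert, Finset.mem_singleton] at hr
    push_neg at hr
    have e1 : Y'.y r = Y.y r := by rw [hy', Function.update_of_ne (by omega)]
    have e2 : Y'.y (r + 1) = Y.y (r + 1) := by rw [hy', Function.update_of_ne (by omega)]
    rw [Gfun, Gfun, e1, e2]
    ring
  have hsum : ∑ r ∈ Finset.range N, Gfun n j Y'.y r
      = ∑ r ∈ Finset.range N, Gfun n j Y.y r
        + ∑ r ∈ ({m - 1, m} : Finset ℕ), (Gfun n j Y'.y r - Gfun n j Y.y r) := by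
    have h1 := Finset.sum_subset hsub hvan
    have h2 : ∑ r ∈ Finset.range N, (Gfun n j Y'.y r - Gfun n j Y.y r)
        = ∑ r ∈ Finset.range N, Gfun n j Y'.y r - ∑ r ∈ Finset.range N, Gfun n j Y.y r :=
      Finset.sum_sub_distrib ..
    linarith
  rw [hsum]
  have main : (if colour n 0 (Y'.y 0) = j then (1 : ℤ) else 0)
      + ∑ r ∈ ({m - 1, m} : Finset ℕ), (Gfun n j Y'.y r - Gfun n j Y.y r)
      = cartan n j (colour n (m + 1) (Y.y m))
        + (if colour n 0 (Y.y 0) = j then 1 else 0) := by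
    exact mainlem hn Y Y' j m hj hlt hy'
  linarith [main]


lemma lmap_finsum (T : Fock n k →ₗ[Kq] Fock n k) (f : ℕ × ℤ → Fock n k)
    (hf : (Function.support f).Finite) : T (∑ᶠ p, f p) = ∑ᶠ p, T (f p) := by
  simpa using T.toAddMonoidHom.map_finsum hf

lemma smul_finsumF (s : Kq) (f : ℕ × ℤ → Fock n k)
    (hf : (Function.support f).Finite) : s • (∑ᶠ p, f p) = ∑ᶠ p, s • f p := by
  simpa using (DistribMulAction.toAddMonoidHom (Fock n k) s).map_finsum hf


/-- For every `k ∈ I` and all `i, j ∈ I`, on the Fock space `F(Λ_k)` we have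
`T_j⁺ ∘ E_i = q^{s_j a_{ji}} • (E_i ∘ T_j⁺)` and `T_d ∘ E_i = q^{δ_{0i}} • (E_i ∘ T_d)`. -/
theorem fock_Tplus_Td_Ei_comm (n : ℕ) (hn : 2 ≤ n) (k i j : ℕ)
    (hk : k ≤ n) (hi : i ≤ n) (hj : j ≤ n) :
    Tplus n k j ∘ₗ Ei n k i = (fq ^ ((sg n j : ℤ) * cartan n j i)) • (Ei n k i ∘ₗ Tplus n k j) ∧
    Td n k ∘ₗ Ei n k i = (fq ^ (if i = 0 then (1 : ℤ) else 0)) • (Ei n k i ∘ₗ Td n k) := by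
  have hfq : (fq : Kq) ≠ 0 := RatFunc.X_ne_zero
  have hqj : qi n j ≠ 0 := pow_ne_zero _ hfq
  constructor
  · apply Finsupp.lhom_ext
    intro Y c
    have hc : (Finsupp.single Y c : Fock (n := n) k) = c • fockB Y := by
      rw [fockB, Finsupp.smul_single, smul_eq_mul, mul_one]
    have key : Tplus n k j (Ei n k i (fockB Y))
        = (fq ^ ((sg n j : ℤ) * cartan n j i)) • Ei n k i (Tplus n k j (fockB Y)) := by
      set fE : ℕ × ℤ → Fock n k := fun p =>
        if h : ConvexAt Y p.1 p.2 ∧ colour n p.1 p.2 = i then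
          (qi n i ^ aExp i p.1 p.2 Y) • fockB (removeY Y p.1 p.2 h.1)
        else 0 with hfE
      have hEi : Ei n k i (fockB Y) = ∑ᶠ p, fE p := by
        rw [Ei, lift_single]
      have hsupp : (Function.support fE).Finite := by
        apply Set.Finite.subset (convex_fin Y)
        intro p hp
        by_contra hcx
        exact hp (dif_neg (fun hh => hcx hh.1))
      have hTY : Tplus n k j (fockB Y) = (qi n j ^ ((cc j Y : ℤ) - cx j Y)) • fockB Y := by
        rw [Tplus, lift_single]
      rw [hEi, lmap_finsum _ _ hsupp, hTY, map_smul, hEi,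
        smul_finsumF _ _ hsupp, smul_finsumF _ _ (by
          apply Set.Finite.subset hsupp
          intro p hp
          simp only [Function.mem_support] at hp ⊢
          intro h0
          exact hp (by rw [h0, smul_zero]))]
      apply finsum_congr
      intro p
      by_cases hcnd : ConvexAt Y p.1 p.2 ∧ colour n p.1 p.2 = i
      · rw [hfE]
        simp only [dif_pos hcnd]
        rw [map_smul]
        have hT' : Tplus n k j (fockB (removeY Y p.1 p.2 hcnd.1))
            = (qi n j ^ ((cc j (removeY Y p.1 p.2 hcnd.1) : ℤ) - cx j (removeY Y p.1 p.2 hcnd.1)))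
              • fockB (removeY Y p.1 p.2 hcnd.1) := by
          rw [Tplus, lift_single]
        rw [hT', smul_smul, smul_smul, smul_smul]
        congr 1
        rw [show (fq : Kq) ^ ((sg n j : ℤ) * cartan n j i)
            = fq ^ ((sg n j : ℤ) * cartan n j (colour n p.1 p.2)) from by rw [hcnd.2]]
        simp only [Dlem hn Y j hj p.1 p.2 hcnd.1]
        rw [zpow_add₀ hqj]
        have hq1 : qi n j ^ (cartan n j (colour n p.1 p.2))
            = fq ^ ((sg n j : ℤ) * cartan n j (colour n p.1 p.2)) := by
          rw [qi, ← zpow_natCast fq (sg n j), ← zpow_mul]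
        rw [hq1]
        ring
      · rw [hfE]
        simp only [dif_neg hcnd, map_zero, smul_zero]
    rw [hc, LinearMap.comp_apply, LinearMap.smul_apply, LinearMap.comp_apply,
      map_smul, map_smul, map_smul, key, smul_comm]
    rw [map_smul]
  · apply Finsupp.lhom_ext
    intro Y c
    have hc : (Finsupp.single Y c : Fock (n := n) k) = c • fockB Y := by
      rw [fockB, Finsupp.smul_single, smul_eq_mul, mul_one]
    have key : Td n k (Ei n k i (fockB Y))
        = (fq ^ (if i = 0 then (1 : ℤ) else 0)) • Ei n k i (Td n k (fockB Y)) := by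
      set fE : ℕ × ℤ → Fock n k := fun p =>
        if h : ConvexAt Y p.1 p.2 ∧ colour n p.1 p.2 = i then
          (qi n i ^ aExp i p.1 p.2 Y) • fockB (removeY Y p.1 p.2 h.1)
        else 0 with hfE
      have hEi : Ei n k i (fockB Y) = ∑ᶠ p, fE p := by
        rw [Ei, lift_single]
      have hsupp : (Function.support fE).Finite := by
        apply Set.Finite.subset (convex_fin Y)
        intro p hp
        by_contra hcx
        exact hp (dif_neg (fun hh => hcx hh.1))
      have hTY : Td n k (fockB Y) = (fq ^ (-(boxes 0 Y : ℤ))) • fockB Y := by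
        rw [Td, lift_single]
      rw [hEi, lmap_finsum _ _ hsupp, hTY, map_smul, hEi,
        smul_finsumF _ _ hsupp, smul_finsumF _ _ (by
          apply Set.Finite.subset hsupp
          intro p hp
          simp only [Function.mem_support] at hp ⊢
          intro h0
          exact hp (by rw [h0, smul_zero]))]
      apply finsum_congr
      intro p
      by_cases hcnd : ConvexAt Y p.1 p.2 ∧ colour n p.1 p.2 = i
      · rw [hfE]
        simp only [dif_pos hcnd]
        rw [map_smul]
        have hT' : Td n k (fockB (removeY Y p.1 p.2 hcnd.1))
            = (fq ^ (-(boxes 0 (removeY Y p.1 p.2 hcnd.1) : ℤ)))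
              • fockB (removeY Y p.1 p.2 hcnd.1) := by
          rw [Td, lift_single]
        rw [hT', smul_smul, smul_smul, smul_smul]
        congr 1
        rw [show (fq : Kq) ^ (if i = 0 then (1 : ℤ) else 0)
            = fq ^ (if colour n p.1 p.2 = 0 then (1 : ℤ) else 0) from by rw [hcnd.2]]
        have hexp : -(boxes 0 (removeY Y p.1 p.2 hcnd.1) : ℤ)
            = (if colour n p.1 p.2 = 0 then (1 : ℤ) else 0) + (-(boxes 0 Y : ℤ)) := by
          have hB := boxes_rem Y p.1 p.2 hcnd.1
          split_ifs at hB ⊢ <;> omega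
        simp only [hexp]
        rw [zpow_add₀ hfq]
        ring
      · rw [hfE]
        simp only [dif_neg hcnd, map_zero, smul_zero]
    rw [hc, LinearMap.comp_apply, LinearMap.smul_apply, LinearMap.comp_apply,
      map_smul, map_smul, map_smul, key, smul_comm]
    rw [map_smul]

end
end

section
/- For every k ∈ I, every Young diagram Y of charge k, and every i ∈ I, the numbers of i-coloured concave and convex corners of Y satisfy cc_i(Y) − cx_i(Y) = δ_{ik} − Σ_{j∈I} a_{ij} · b_j(Y). (Equivalently, every Young diagram of charge k is a weight vector of the Fock space of weight Λ_k − Σ_j b_j(Y) α_j.) -/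
set_option maxHeartbeats 1000000


open scoped Classical

noncomputable section

variable {n k : ℕ}

-- ===== auxiliary lemmas =====
namespace FockAux

def chi (n i : ℕ) (s : ℤ) : ℤ := if colour n 0 s = i then 1 else 0

lemma colour_shift (n l : ℕ) (z : ℤ) : colour n l z = colour n 0 ((l : ℤ) + z) := by
  simp [colour]

lemma colour_le (n l : ℕ) (z : ℤ) : colour n l z ≤ n := by
  unfold colour
  simp only
  split <;> omega


lemma core (n i a am ap : ℕ) (hn : 2 ≤ n) (hi : i ≤ n) (ha : a < 2*n)
    (hap : ap = a + 1 ∨ (a + 1 = 2*n ∧ ap = 0))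
    (ham : (am = a - 1 ∧ 1 ≤ a) ∨ (a = 0 ∧ am = 2*n - 1)) :
    cartan n i (if a ≤ n then a else 2*n - a) =
      2 * (if (if a ≤ n then a else 2*n - a) = i then (1:ℤ) else 0)
      - (if (if am ≤ n then am else 2*n - am) = i then 1 else 0)
      - (if (if ap ≤ n then ap else 2*n - ap) = i then 1 else 0) := by
  unfold cartan
  split_ifs <;> omega

lemma cartan_colour (n : ℕ) (hn : 2 ≤ n) (i : ℕ) (hi : i ≤ n) (s : ℤ) :
    cartan n i (colour n 0 s) =
      2 * chi n i s - chi n i (s - 1) - chi n i (s + 1) := by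
  have hn' : (2 : ℤ) ≤ (n : ℤ) := by exact_mod_cast hn
  have h2n : (0 : ℤ) < 2 * (n : ℤ) := by omega
  have hr0 : 0 ≤ s % (2 * (n : ℤ)) := Int.emod_nonneg s (by omega)
  have hr1 : s % (2 * (n : ℤ)) < 2 * (n : ℤ) := Int.emod_lt_of_pos s h2n
  have h1M : (1 : ℤ) % (2 * (n : ℤ)) = 1 := Int.emod_eq_of_lt (by omega) (by omega)
  have hp : (s + 1) % (2 * (n : ℤ))
      = if s % (2 * (n : ℤ)) + 1 < 2 * (n : ℤ) then s % (2 * (n : ℤ)) + 1 else 0 := by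
    rw [Int.add_emod, h1M]
    split_ifs with h
    · exact Int.emod_eq_of_lt (by omega) (by omega)
    · have he : s % (2 * (n : ℤ)) + 1 = 2 * (n : ℤ) := by omega
      rw [he, Int.emod_self]
  have hm : (s - 1) % (2 * (n : ℤ))
      = if 1 ≤ s % (2 * (n : ℤ)) then s % (2 * (n : ℤ)) - 1 else 2 * (n : ℤ) - 1 := by
    rw [Int.sub_emod, h1M]
    split_ifs with h
    · exact Int.emod_eq_of_lt (by omega) (by omega)
    · have h0 : s % (2 * (n : ℤ)) = 0 := by omega
      rw [h0, show (0 - 1 : ℤ) = 2 * (n : ℤ) - 1 + 2 * (n : ℤ) * (-1) by ring,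
        Int.add_mul_emod_self_left]
      exact Int.emod_eq_of_lt (by omega) (by omega)
  have hqp0 : 0 ≤ (s + 1) % (2 * (n : ℤ)) := Int.emod_nonneg _ (by omega)
  have hqm0 : 0 ≤ (s - 1) % (2 * (n : ℤ)) := Int.emod_nonneg _ (by omega)
  unfold chi colour
  simp only [Nat.cast_zero, zero_add]
  generalize hq : s % (2 * (n : ℤ)) = q at hr0 hr1 hp hm
  generalize hqp : (s + 1) % (2 * (n : ℤ)) = qp at hp hqp0
  generalize hqm : (s - 1) % (2 * (n : ℤ)) = qm at hm hqm0
  have hap : qp.toNat = q.toNat + 1 ∨ (q.toNat + 1 = 2 * n ∧ qp.toNat = 0) := by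
    split_ifs at hp with h
    · left; omega
    · right; omega
  have ham : (qm.toNat = q.toNat - 1 ∧ 1 ≤ q.toNat) ∨ (q.toNat = 0 ∧ qm.toNat = 2 * n - 1) := by
    split_ifs at hm with h
    · left; omega
    · right; omega
  exact core n i q.toNat qm.toNat qp.toNat hn hi (by omega) hap ham


lemma sum_cartan_chi (n : ℕ) (hn : 2 ≤ n) (i : ℕ) (hi : i ≤ n) (s : ℤ) :
    ∑ j ∈ Finset.range (n + 1), cartan n i j * chi n j s
      = 2 * chi n i s - chi n i (s - 1) - chi n i (s + 1) := by
  have hc : colour n 0 s ≤ n := colour_le n 0 s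
  have h1 : ∑ j ∈ Finset.range (n + 1), cartan n i j * chi n j s
      = cartan n i (colour n 0 s) := by
    rw [Finset.sum_eq_single (colour n 0 s)]
    · simp [chi]
    · intro j _ hne
      simp [chi, Ne.symm hne]
    · intro h
      exact absurd (Finset.mem_range.mpr (by omega)) h
  rw [h1, cartan_colour n hn i hi s]

lemma sum_Ioc_sub (f : ℤ → ℤ) (a b : ℤ) (h : a ≤ b) :
    ∑ s ∈ Finset.Ioc a b, (f s - f (s - 1)) = f b - f a := by
  refine Int.le_induction (motive := fun b _ => ∑ s ∈ Finset.Ioc a b, (f s - f (s - 1)) = f b - f a) ?_ ?_ b h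
  · simp
  · intro b hb ih
    have hins : Finset.Ioc a (b + 1) = insert (b + 1) (Finset.Ioc a b) := by
      ext x
      simp only [Finset.mem_Ioc, Finset.mem_insert]
      omega
    rw [hins, Finset.sum_insert (by simp [Finset.mem_Ioc]), ih,
      show b + 1 - 1 = b by ring]
    ring

lemma sum_Ioc_key (f : ℤ → ℤ) (a b : ℤ) (h : a ≤ b) :
    ∑ s ∈ Finset.Ioc a b, (2 * f s - f (s - 1) - f (s + 1))
      = (f b - f (b + 1)) - (f a - f (a + 1)) := by
  have h1 := sum_Ioc_sub f a b h
  have h2 := sum_Ioc_sub (fun s => f (s + 1)) a b h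
  have h3 : ∑ s ∈ Finset.Ioc a b, (2 * f s - f (s - 1) - f (s + 1))
      = ∑ s ∈ Finset.Ioc a b, ((f s - f (s - 1)) - (f (s + 1) - f (s - 1 + 1))) := by
    apply Finset.sum_congr rfl
    intro x _
    rw [show x - 1 + 1 = x by ring]
    ring
  rw [h3, Finset.sum_sub_distrib, h1, h2]
  ring

lemma sum_Ioc_shift (f : ℤ → ℤ) (c a b : ℤ) :
    ∑ y ∈ Finset.Ioc a b, f (c + y) = ∑ s ∈ Finset.Ioc (c + a) (c + b), f s := by
  rw [← Finset.map_add_left_Ioc, Finset.sum_map]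
  rfl


lemma cc_eq (n k : ℕ) (Y : YD n k) (i N : ℕ) (hN : ∀ l, N ≤ l → Y.y l = (k : ℤ)) :
    (cc i Y : ℤ) = chi n i (Y.y 0)
      + ∑ m ∈ Finset.range N,
          (if Y.y m < Y.y (m + 1) then chi n i ((m : ℤ) + 1 + Y.y (m + 1)) else 0) := by
  classical
  have hset : {p : ℕ × ℤ | ConcaveAt Y p.1 p.2 ∧ colour n p.1 p.2 = i}
      = ↑(((Finset.range (N + 1)).filter
            (fun m => (m = 0 ∨ Y.y (m - 1) < Y.y m) ∧ colour n m (Y.y m) = i)).image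
          (fun m => ((m : ℕ), Y.y m))) := by
    ext p
    simp only [Set.mem_setOf_eq, Finset.coe_image, Set.mem_image, Finset.mem_coe,
      Finset.mem_filter, Finset.mem_range]
    constructor
    · rintro ⟨hcav, hcol⟩
      rcases hcav with ⟨h0, hz⟩ | ⟨m, hl, hlt, hz⟩
      · refine ⟨0, ⟨by omega, Or.inl rfl, by rw [h0, hz] at hcol; exact hcol⟩, ?_⟩
        exact Prod.ext_iff.mpr ⟨h0.symm, hz.symm⟩
      · have hmN : m < N := by
          by_contra hc
          have e1 := hN m (by omega)
          have e2 := hN (m + 1) (by omega)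
          omega
        refine ⟨m + 1, ⟨by omega, Or.inr (by simpa using hlt), by rw [hl, hz] at hcol; exact hcol⟩, ?_⟩
        exact Prod.ext_iff.mpr ⟨hl.symm, hz.symm⟩
    · rintro ⟨m, ⟨hmN, hcorner, hcol⟩, rfl⟩
      refine ⟨?_, hcol⟩
      rcases hcorner with rfl | hlt
      · exact Or.inl ⟨rfl, rfl⟩
      · rcases Nat.eq_zero_or_pos m with rfl | hm
        · exact absurd hlt (lt_irrefl _)
        · exact Or.inr ⟨m - 1, by omega, by
            have : m - 1 + 1 = m := by omega
            rw [this]; exact ⟨hlt, rfl⟩⟩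
  rw [cc, hset, Set.ncard_coe_finset,
    Finset.card_image_of_injective _ (fun a b hab => congrArg Prod.fst hab),
    Finset.card_filter]
  push_cast
  rw [Finset.sum_range_succ']
  have h0 : (if ((0 = 0 ∨ Y.y (0 - 1) < Y.y 0) ∧ colour n 0 (Y.y 0) = i) then (1 : ℤ) else 0)
      = chi n i (Y.y 0) := by
    simp [chi]
  rw [h0, add_comm]
  congr 1
  apply Finset.sum_congr rfl
  intro m _
  have hne : ¬ (m + 1 = 0) := by omega
  simp only [hne, false_or, Nat.add_sub_cancel]
  rw [ite_and]
  rcases lt_or_ge (Y.y m) (Y.y (m + 1)) with h | h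
  · rw [if_pos h, if_pos h]
    unfold chi
    rw [colour_shift n (m + 1) (Y.y (m + 1))]
    push_cast
    ring_nf
  · rw [if_neg (by omega), if_neg (by omega)]

lemma cx_eq (n k : ℕ) (Y : YD n k) (i N : ℕ) (hN : ∀ l, N ≤ l → Y.y l = (k : ℤ)) :
    (cx i Y : ℤ) = ∑ m ∈ Finset.range N,
          (if Y.y m < Y.y (m + 1) then chi n i ((m : ℤ) + 1 + Y.y m) else 0) := by
  classical
  have hset : {p : ℕ × ℤ | ConvexAt Y p.1 p.2 ∧ colour n p.1 p.2 = i}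
      = ↑(((Finset.range N).filter
            (fun m => Y.y m < Y.y (m + 1) ∧ colour n (m + 1) (Y.y m) = i)).image
          (fun m => (m + 1, Y.y m))) := by
    ext p
    simp only [Set.mem_setOf_eq, Finset.coe_image, Set.mem_image, Finset.mem_coe,
      Finset.mem_filter, Finset.mem_range]
    constructor
    · rintro ⟨⟨m, hl, hlt, hz⟩, hcol⟩
      have hmN : m < N := by
        by_contra hc
        have e1 := hN m (by omega)
        have e2 := hN (m + 1) (by omega)
        omega
      refine ⟨m, ⟨hmN, hlt, by rw [hl, hz] at hcol; exact hcol⟩, ?_⟩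
      exact Prod.ext_iff.mpr ⟨hl.symm, hz.symm⟩
    · rintro ⟨m, ⟨hmN, hlt, hcol⟩, rfl⟩
      exact ⟨⟨m, rfl, hlt, rfl⟩, hcol⟩
  rw [cx, hset, Set.ncard_coe_finset,
    Finset.card_image_of_injective _ (fun a b hab => by
      have := congrArg Prod.fst hab
      simpa using this),
    Finset.card_filter]
  push_cast
  apply Finset.sum_congr rfl
  intro m _
  rw [ite_and]
  rcases lt_or_ge (Y.y m) (Y.y (m + 1)) with h | h
  · rw [if_pos h, if_pos h]
    unfold chi
    rw [colour_shift n (m + 1) (Y.y m)]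
    push_cast
    ring_nf
  · rw [if_neg (by omega), if_neg (by omega)]

lemma boxes_eq (n k : ℕ) (Y : YD n k) (j N : ℕ) (hN : ∀ l, N ≤ l → Y.y l = (k : ℤ)) :
    (boxes j Y : ℤ) = ∑ m ∈ Finset.range N,
      ∑ s ∈ Finset.Ioc ((m : ℤ) + Y.y m) ((m : ℤ) + k), chi n j s := by
  classical
  have hy0 : ∀ m, Y.y 0 ≤ Y.y m := fun m => Y.mono (Nat.zero_le m)
  have hset : {p : ℕ × ℤ | Y.y p.1 < p.2 ∧ p.2 ≤ (k : ℤ) ∧ colour n p.1 p.2 = j}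
      = ↑((Finset.range N ×ˢ Finset.Ioc (Y.y 0) (k : ℤ)).filter
          (fun p => Y.y p.1 < p.2 ∧ p.2 ≤ (k : ℤ) ∧ colour n p.1 p.2 = j)) := by
    ext p
    simp only [Set.mem_setOf_eq, Finset.coe_filter, Set.mem_setOf_eq,
      Finset.mem_product, Finset.mem_range, Finset.mem_Ioc]
    constructor
    · rintro ⟨h1, h2, h3⟩
      have hp1 : p.1 < N := by
        by_contra hc
        have := hN p.1 (by omega)
        omega
      exact ⟨⟨hp1, lt_of_le_of_lt (hy0 p.1) h1, h2⟩, h1, h2, h3⟩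
    · rintro ⟨-, h⟩
      exact h
  rw [boxes, hset, Set.ncard_coe_finset, Finset.card_filter]
  push_cast
  rw [Finset.sum_product]
  apply Finset.sum_congr rfl
  intro m _
  have step1 : ∀ y ∈ Finset.Ioc (Y.y 0) (k : ℤ),
      (if (Y.y m < y ∧ y ≤ (k : ℤ) ∧ colour n m y = j) then (1 : ℤ) else 0)
        = if (Y.y m < y ∧ y ≤ (k : ℤ)) then chi n j ((m : ℤ) + y) else 0 := by
    intro y _
    by_cases hA : Y.y m < y ∧ y ≤ (k : ℤ)
    · rw [if_pos hA]
      unfold chi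
      rw [colour_shift n m y]
      simp [hA.1, hA.2]
    · rw [if_neg (by tauto), if_neg hA]
  rw [Finset.sum_congr rfl step1,
    ← Finset.sum_subset (Finset.Ioc_subset_Ioc_left (hy0 m))
      (fun y _ hy2 => by
        rw [if_neg]
        simp only [Finset.mem_Ioc, not_and_or, not_lt, not_le] at hy2
        omega),
    Finset.sum_congr rfl (fun y hy => if_pos (Finset.mem_Ioc.mp hy)),
    sum_Ioc_shift (chi n j) (m : ℤ) (Y.y m) (k : ℤ)]

end FockAux

open FockAux in
/-- For every `k ∈ I`, every Young diagram `Y` of charge `k` and every `i ∈ I`,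
`cc_i(Y) - cx_i(Y) = δ_{ik} - Σ_{j∈I} a_{ij} b_j(Y)`, i.e. every Young diagram of charge `k`
is a weight vector of weight `Λ_k - Σ_j b_j(Y) α_j`. -/
theorem fock_weight_vector (n : ℕ) (hn : 2 ≤ n) (k : ℕ) (hk : k ≤ n)
    (Y : YD n k) (i : ℕ) (hi : i ≤ n) :
    (cc i Y : ℤ) - (cx i Y : ℤ)
      = (if i = k then 1 else 0)
        - ∑ j ∈ Finset.range (n + 1), cartan n i j * (boxes j Y : ℤ) := by
  classical
  obtain ⟨N, hN⟩ := Y.eventually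
  have hyk : ∀ m, Y.y m ≤ (k : ℤ) := by
    intro m
    have h1 := Y.mono (le_max_left m N)
    rwa [hN (max m N) (le_max_right m N)] at h1
  have hbox : ∑ j ∈ Finset.range (n + 1), cartan n i j * (boxes j Y : ℤ)
      = (chi n i (k : ℤ) - chi n i ((N : ℤ) + (k : ℤ)))
        - ∑ m ∈ Finset.range N,
            (chi n i ((m : ℤ) + Y.y m) - chi n i ((m : ℤ) + Y.y m + 1)) := by
    have e1 : ∑ j ∈ Finset.range (n + 1), cartan n i j * (boxes j Y : ℤ)
        = ∑ m ∈ Finset.range N,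
            ∑ s ∈ Finset.Ioc ((m : ℤ) + Y.y m) ((m : ℤ) + (k : ℤ)),
              ∑ j ∈ Finset.range (n + 1), cartan n i j * chi n j s := by
      rw [Finset.sum_congr rfl (fun j _ => by rw [boxes_eq n k Y j N hN])]
      simp_rw [Finset.mul_sum]
      rw [Finset.sum_comm]
      exact Finset.sum_congr rfl (fun m _ => Finset.sum_comm)
    rw [e1]
    have e2 : ∀ m ∈ Finset.range N,
        ∑ s ∈ Finset.Ioc ((m : ℤ) + Y.y m) ((m : ℤ) + (k : ℤ)),
            ∑ j ∈ Finset.range (n + 1), cartan n i j * chi n j s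
          = (chi n i ((m : ℤ) + (k : ℤ)) - chi n i ((m : ℤ) + (k : ℤ) + 1))
            - (chi n i ((m : ℤ) + Y.y m) - chi n i ((m : ℤ) + Y.y m + 1)) := by
      intro m _
      rw [Finset.sum_congr rfl (fun s _ => sum_cartan_chi n hn i hi s),
        sum_Ioc_key (chi n i) _ _ (by have := hyk m; omega)]
    rw [Finset.sum_congr rfl e2, Finset.sum_sub_distrib]
    have e3 : ∑ m ∈ Finset.range N,
        (chi n i ((m : ℤ) + (k : ℤ)) - chi n i ((m : ℤ) + (k : ℤ) + 1))
        = chi n i ((k : ℤ)) - chi n i ((N : ℤ) + (k : ℤ)) := by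
      have e4 := Finset.sum_range_sub' (fun m : ℕ => chi n i ((m : ℤ) + (k : ℤ))) N
      simp only [Nat.cast_zero, zero_add] at e4
      rw [← e4]
      apply Finset.sum_congr rfl
      intro m _
      congr 2
      push_cast
      ring
    rw [e3]
  have hdelta : (if i = k then (1 : ℤ) else 0) = chi n i (k : ℤ) := by
    unfold chi
    have hck : colour n 0 (k : ℤ) = k := by
      unfold colour
      simp only [Nat.cast_zero, zero_add]
      have : ((k : ℤ)) % (2 * (n : ℤ)) = (k : ℤ) := Int.emod_eq_of_lt (by omega) (by
        push_cast; omega)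
      rw [this, Int.toNat_natCast, if_pos hk]
    rw [hck]
    by_cases h : i = k
    · rw [if_pos h, if_pos h.symm]
    · rw [if_neg h, if_neg (Ne.symm h)]
  rw [cc_eq n k Y i N hN, cx_eq n k Y i N hN, hbox, ← hdelta]
  have hAB : (∑ m ∈ Finset.range N,
        (if Y.y m < Y.y (m + 1) then chi n i ((m : ℤ) + 1 + Y.y (m + 1)) else 0))
      - (∑ m ∈ Finset.range N,
        (if Y.y m < Y.y (m + 1) then chi n i ((m : ℤ) + 1 + Y.y m) else 0))
      = ∑ m ∈ Finset.range N,
          (chi n i (((m + 1 : ℕ) : ℤ) + Y.y (m + 1)) - chi n i ((m : ℤ) + Y.y m + 1)) := by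
    rw [← Finset.sum_sub_distrib]
    apply Finset.sum_congr rfl
    intro m _
    by_cases h : Y.y m < Y.y (m + 1)
    · rw [if_pos h, if_pos h]
      have a1 : (m : ℤ) + 1 + Y.y (m + 1) = ((m + 1 : ℕ) : ℤ) + Y.y (m + 1) := by
        push_cast; ring
      have a2 : (m : ℤ) + 1 + Y.y m = (m : ℤ) + Y.y m + 1 := by ring
      rw [a1, a2]
    · rw [if_neg h, if_neg h]
      have he : Y.y (m + 1) = Y.y m := le_antisymm (by omega) (Y.mono (Nat.le_succ m))
      have ha : (((m + 1 : ℕ)) : ℤ) + Y.y (m + 1) = (m : ℤ) + Y.y m + 1 := by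
        rw [he]; push_cast; ring
      rw [ha]
      ring
  have hS : chi n i (Y.y 0)
        + ∑ m ∈ Finset.range N, chi n i (((m + 1 : ℕ) : ℤ) + Y.y (m + 1))
      = chi n i ((N : ℤ) + (k : ℤ))
        + ∑ m ∈ Finset.range N, chi n i ((m : ℤ) + Y.y m) := by
    have h1 := Finset.sum_range_succ' (fun m : ℕ => chi n i ((m : ℤ) + Y.y m)) N
    have h2 := Finset.sum_range_succ (fun m : ℕ => chi n i ((m : ℤ) + Y.y m)) N
    have h3 : chi n i (((0 : ℕ) : ℤ) + Y.y 0) = chi n i (Y.y 0) := by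
      norm_num
    have h4 : chi n i ((N : ℤ) + Y.y N) = chi n i ((N : ℤ) + (k : ℤ)) := by
      rw [hN N le_rfl]
    rw [h3] at h1
    rw [h4] at h2
    linarith [h1, h2]
  have hsplit : ∑ m ∈ Finset.range N,
        (chi n i (((m + 1 : ℕ) : ℤ) + Y.y (m + 1)) - chi n i ((m : ℤ) + Y.y m + 1))
      = (∑ m ∈ Finset.range N, chi n i (((m + 1 : ℕ) : ℤ) + Y.y (m + 1)))
        - ∑ m ∈ Finset.range N, chi n i ((m : ℤ) + Y.y m + 1) := Finset.sum_sub_distrib _ _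
  have hsplit2 : ∑ m ∈ Finset.range N,
        (chi n i ((m : ℤ) + Y.y m) - chi n i ((m : ℤ) + Y.y m + 1))
      = (∑ m ∈ Finset.range N, chi n i ((m : ℤ) + Y.y m))
        - ∑ m ∈ Finset.range N, chi n i ((m : ℤ) + Y.y m + 1) := Finset.sum_sub_distrib _ _
  linarith [hAB, hS, hsplit, hsplit2]


end
end

section
/- Let Y be a Young diagram of charge k having a convex corner at an i-coloured site, and let Y′ be obtained from Y by removing that corner. Then Y′ is again a Young diagram of charge k and, for every j ∈ I, cc_j(Y′) − cx_j(Y′) = (cc_j(Y) − cx_j(Y)) + a_{ji}. -/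
open scoped Classical

noncomputable section

variable {n k : ℕ}

/-! ### Auxiliary lemmas for `ccx_remove` -/

lemma colour_eq_sum (n : ℕ) {l l' : ℕ} {z z' : ℤ} (h : (l:ℤ) + z = (l':ℤ) + z') :
    colour n l z = colour n l' z' := by unfold colour; rw [h]

set_option maxHeartbeats 1000000 in
lemma cartan_colour (n : ℕ) (hn : 2 ≤ n) (i j : ℕ) (hi : i ≤ n) (hj : j ≤ n)
    (l : ℕ) (z : ℤ) (hcol : colour n (l+1) z = i) :
    2 * (if i = j then (1:ℤ) else 0) - (if colour n l z = j then 1 else 0)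
      - (if colour n (l+1) (z+1) = j then 1 else 0) = cartan n j i := by
  have hM : (0:ℤ) < 2 * (n:ℤ) := by positivity
  simp only [colour, cartan] at hcol ⊢
  push_cast at hcol ⊢
  set a := ((l:ℤ) + 1 + z) % (2 * (n:ℤ)) with ha
  have ha0 : 0 ≤ a := Int.emod_nonneg _ (by omega)
  have ha1 : a < 2 * (n:ℤ) := Int.emod_lt_of_pos _ hM
  clear_value a
  have hm1 : (-1 : ℤ) % (2 * (n:ℤ)) = 2 * n - 1 := by
    rw [show (-1:ℤ) = (2*(n:ℤ) - 1) + (2*(n:ℤ)) * (-1) by ring, Int.add_mul_emod_self_left,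
      Int.emod_eq_of_lt (by omega) (by omega)]
  have e0 : ((l:ℤ) + z) % (2 * (n:ℤ)) = if a = 0 then 2*(n:ℤ) - 1 else a - 1 := by
    rw [show (l:ℤ) + z = ((l:ℤ) + 1 + z) + (-1) by ring, Int.add_emod, ← ha, hm1]
    split_ifs with h0
    · rw [h0]; rw [Int.emod_eq_of_lt (by omega) (by omega)]; ring
    · rw [show a + (2*(n:ℤ) - 1) = (a - 1) + (2*(n:ℤ)) * 1 by ring, Int.add_mul_emod_self_left,
        Int.emod_eq_of_lt (by omega) (by omega)]
  have e2 : ((l:ℤ) + 1 + (z + 1)) % (2 * (n:ℤ)) = if a = 2*(n:ℤ) - 1 then 0 else a + 1 := by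
    rw [show (l:ℤ) + 1 + (z + 1) = ((l:ℤ) + 1 + z) + 1 by ring, Int.add_emod, ← ha,
      Int.emod_eq_of_lt (by omega) (by omega : (1:ℤ) < 2*(n:ℤ))]
    split_ifs with h0
    · rw [h0]; simp
    · rw [Int.emod_eq_of_lt (by omega) (by omega)]
  set b := a.toNat with hb
  clear_value b
  have hab : a = (b : ℤ) := by omega
  have hbn : b < 2 * n := by omega
  have hcm : (if (((l:ℤ)+z) % (2*(n:ℤ))).toNat ≤ n then (((l:ℤ)+z) % (2*(n:ℤ))).toNat
      else 2*n - (((l:ℤ)+z) % (2*(n:ℤ))).toNat)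
      = (if b = 0 then 1 else if b - 1 ≤ n then b - 1 else 2*n - (b-1)) := by
    simp only [e0]
    split_ifs <;> omega
  have hcp : (if (((l:ℤ)+1+(z+1)) % (2*(n:ℤ))).toNat ≤ n then (((l:ℤ)+1+(z+1)) % (2*(n:ℤ))).toNat
      else 2*n - (((l:ℤ)+1+(z+1)) % (2*(n:ℤ))).toNat)
      = (if b = 2*n - 1 then 0 else if b + 1 ≤ n then b + 1 else 2*n - (b+1)) := by
    simp only [e2]
    split_ifs <;> omega
  simp only [hcm, hcp]
  have hcol' : (if b ≤ n then b else 2*n - b) = i := hcol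
  clear hcm hcp e0 e2 hm1 ha hb hab hcol ha0 ha1 hM a
  have hreg : b = 0 ∨ (1 ≤ b ∧ b ≤ n - 1) ∨ b = n ∨ (n+1 ≤ b ∧ b ≤ 2*n-2) ∨ b = 2*n-1 := by
    omega
  rcases hreg with hr | ⟨hr1, hr2⟩ | hr | ⟨hr1, hr2⟩ | hr
  · have hc0 : (if b ≤ n then b else 2*n - b) = 0 := by split_ifs <;> omega
    have hc1 : (if b = 0 then 1 else if b - 1 ≤ n then b - 1 else 2*n - (b-1)) = 1 := by
      split_ifs <;> omega
    have hc2 : (if b = 2*n - 1 then 0 else if b + 1 ≤ n then b + 1 else 2*n - (b+1)) = 1 := by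
      split_ifs <;> omega
    rw [hc0] at hcol'; subst hcol'
    simp only [hc1, hc2]
    split_ifs <;> first | omega | (simp_all; omega) | simp_all
  · have hc0 : (if b ≤ n then b else 2*n - b) = b := by split_ifs <;> omega
    have hc1 : (if b = 0 then 1 else if b - 1 ≤ n then b - 1 else 2*n - (b-1)) = b - 1 := by
      split_ifs <;> omega
    have hc2 : (if b = 2*n - 1 then 0 else if b + 1 ≤ n then b + 1 else 2*n - (b+1)) = b + 1 := by
      split_ifs <;> omega
    rw [hc0] at hcol'; subst hcol'
    simp only [hc1, hc2]
    split_ifs <;> first | omega | (simp_all; omega) | simp_all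
  · have hc0 : (if b ≤ n then b else 2*n - b) = n := by split_ifs <;> omega
    have hc1 : (if b = 0 then 1 else if b - 1 ≤ n then b - 1 else 2*n - (b-1)) = n - 1 := by
      split_ifs <;> omega
    have hc2 : (if b = 2*n - 1 then 0 else if b + 1 ≤ n then b + 1 else 2*n - (b+1)) = n - 1 := by
      split_ifs <;> omega
    rw [hc0] at hcol'; subst hcol'
    simp only [hc1, hc2]
    split_ifs <;> first | omega | (simp_all; omega) | simp_all
  · have hc0 : (if b ≤ n then b else 2*n - b) = 2*n - b := by split_ifs <;> omega
    have hc1 : (if b = 0 then 1 else if b - 1 ≤ n then b - 1 else 2*n - (b-1)) = (2*n - b) + 1 := by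
      split_ifs <;> omega
    have hc2 : (if b = 2*n - 1 then 0 else if b + 1 ≤ n then b + 1 else 2*n - (b+1)) = (2*n - b) - 1 := by
      split_ifs <;> omega
    rw [hc0] at hcol'; subst hcol'
    simp only [hc1, hc2]
    split_ifs <;> first | omega | (simp_all; omega) | simp_all
  · have hc0 : (if b ≤ n then b else 2*n - b) = 1 := by split_ifs <;> omega
    have hc1 : (if b = 0 then 1 else if b - 1 ≤ n then b - 1 else 2*n - (b-1)) = 2 := by
      split_ifs <;> omega
    have hc2 : (if b = 2*n - 1 then 0 else if b + 1 ≤ n then b + 1 else 2*n - (b+1)) = 0 := by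
      split_ifs <;> omega
    rw [hc0] at hcol'; subst hcol'
    simp only [hc1, hc2]
    split_ifs <;> first | omega | (simp_all; omega) | simp_all

lemma ncard_two {α : Type*} (x y : α) (hxy : x ≠ y) (P Q : Prop) :
    ({p : α | (p = x ∧ P) ∨ (p = y ∧ Q)}).ncard
      = (if P then 1 else 0) + (if Q then 1 else 0) := by
  by_cases hP : P <;> by_cases hQ : Q
  · have hs : {p : α | (p = x ∧ P) ∨ (p = y ∧ Q)} = {x, y} := by ext p; simp [hP, hQ]
    rw [hs, Set.ncard_pair hxy, if_pos hP, if_pos hQ]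
  · have hs : {p : α | (p = x ∧ P) ∨ (p = y ∧ Q)} = {x} := by ext p; simp [hP, hQ]
    rw [hs, Set.ncard_singleton, if_pos hP, if_neg hQ]
  · have hs : {p : α | (p = x ∧ P) ∨ (p = y ∧ Q)} = {y} := by ext p; simp [hP, hQ]
    rw [hs, Set.ncard_singleton, if_neg hP, if_pos hQ]
  · have hs : {p : α | (p = x ∧ P) ∨ (p = y ∧ Q)} = (∅ : Set α) := by ext p; simp [hP, hQ]
    rw [hs, Set.ncard_empty, if_neg hP, if_neg hQ]

lemma finite_concave (Y : YD n k) (T : Set (ℕ × ℤ))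
    (hT : ∀ p ∈ T, ConcaveAt Y p.1 p.2) : T.Finite := by
  obtain ⟨N, hN⟩ := Y.eventually
  refine Set.Finite.subset ((Set.finite_Iic N).image (fun l => (l, Y.y l))) ?_
  rintro ⟨l, z⟩ hp
  rcases hT _ hp with ⟨h0, hz⟩ | ⟨r, hr, hlt, hz⟩
  · have h0' : l = 0 := h0
    have hz' : z = Y.y 0 := hz
    exact ⟨0, by simp, by simp [Prod.ext_iff, h0', hz']⟩
  · have hr' : l = r + 1 := hr
    have hz' : z = Y.y (r + 1) := hz
    refine ⟨r + 1, ?_, by simp [Prod.ext_iff, hr', hz']⟩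
    simp only [Set.mem_Iic]
    by_contra hc
    have h1 := hN r (by omega)
    have h2 := hN (r+1) (by omega)
    omega

lemma finite_convex (Y : YD n k) (T : Set (ℕ × ℤ))
    (hT : ∀ p ∈ T, ConvexAt Y p.1 p.2) : T.Finite := by
  obtain ⟨N, hN⟩ := Y.eventually
  refine Set.Finite.subset ((Set.finite_Iic N).image (fun r => (r + 1, Y.y r))) ?_
  rintro ⟨l, z⟩ hp
  obtain ⟨r, hr, hlt, hz⟩ := hT _ hp
  have hr' : l = r + 1 := hr
  have hz' : z = Y.y r := hz
  refine ⟨r, ?_, by simp [Prod.ext_iff, hr', hz']⟩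
  simp only [Set.mem_Iic]
  by_contra hc
  have h1 := hN r (by omega)
  have h2 := hN (r+1) (by omega)
  omega

set_option maxHeartbeats 2000000 in
/-- Removing a convex corner at an `i`-coloured site from a Young diagram `Y`
of charge `k` yields a Young diagram `Y'` of charge `k` (this is `removeY Y l z h : YD n k`)
with `cc_j(Y') - cx_j(Y') = (cc_j(Y) - cx_j(Y)) + a_{ji}` for every `j ∈ I`. -/
theorem ccx_remove (n : ℕ) (hn : 2 ≤ n) (k : ℕ) (hk : k ≤ n) (Y : YD n k)
    (l : ℕ) (z : ℤ) (i : ℕ) (hi : i ≤ n) (hcol : colour n l z = i)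
    (h : ConvexAt Y l z) (j : ℕ) (hj : j ≤ n) :
    (cc j (removeY Y l z h) : ℤ) - (cx j (removeY Y l z h) : ℤ)
      = ((cc j Y : ℤ) - (cx j Y : ℤ)) + cartan n j i := by
  obtain ⟨m, hl, hlt, hz⟩ := id h
  subst hl; subst hz
  set Y' := removeY Y (m+1) (Y.y m) h with hY'
  have hu' : ∀ r : ℕ, Y'.y r = if r = m then Y.y m + 1 else Y.y r := by
    intro r
    simp [hY', removeY, Function.update_apply]
  clear_value Y'
  have hmono : Y.y (m-1) ≤ Y.y m := Y.mono (Nat.sub_le m 1)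
  have hne : ∀ (a b : ℤ), ((m : ℕ), a) ≠ ((m + 1 : ℕ), b) := by
    intro a b hp
    injection hp with h1 _
    omega
  have hci : colour n m (Y.y m + 1) = i :=
    (colour_eq_sum n (l := m) (l' := m+1) (z := Y.y m + 1) (z' := Y.y m)
      (by push_cast; ring)).trans hcol
  have hkey := cartan_colour n hn i j hi hj m (Y.y m) hcol
  -- window characterizations
  have hA : {p : ℕ × ℤ | ConcaveAt Y p.1 p.2 ∧ colour n p.1 p.2 = j}
        ∩ {p : ℕ × ℤ | p.1 = m ∨ p.1 = m + 1}
      = {p : ℕ × ℤ | (p = ((m : ℕ), Y.y m) ∧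
            ((m = 0 ∨ Y.y (m-1) < Y.y m) ∧ colour n m (Y.y m) = j))
          ∨ (p = ((m + 1 : ℕ), Y.y (m+1)) ∧ colour n (m+1) (Y.y (m+1)) = j)} := by
    ext ⟨a, w⟩
    simp only [Set.mem_inter_iff, Set.mem_setOf_eq, ConcaveAt, Prod.mk.injEq]
    constructor
    · rintro ⟨⟨hcv, hcj⟩, hw⟩
      rcases hcv with ⟨rfl, rfl⟩ | ⟨r, rfl, hlt', rfl⟩
      · have hm0 : m = 0 := by omega
        subst hm0
        exact Or.inl ⟨⟨rfl, rfl⟩, Or.inl rfl, hcj⟩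
      · rcases hw with hw | hw
        · subst hw
          exact Or.inl ⟨⟨rfl, rfl⟩, Or.inr (by simpa using hlt'), hcj⟩
        · obtain rfl : m = r := by omega
          exact Or.inr ⟨⟨rfl, rfl⟩, hcj⟩
    · rintro (⟨⟨ha1, rfl⟩, hP, hcj⟩ | ⟨⟨ha1, rfl⟩, hcj⟩) <;> obtain rfl := ha1.symm
      · refine ⟨⟨?_, hcj⟩, Or.inl rfl⟩
        rcases hP with rfl | hP
        · exact Or.inl ⟨rfl, rfl⟩
        · have hm1 : 1 ≤ m := by
            by_contra hc
            have hmz : m = 0 := by omega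
            rw [hmz] at hP
            exact absurd hP (lt_irrefl _)
          refine Or.inr ⟨m - 1, by omega, ?_, ?_⟩
          · rw [show m - 1 + 1 = m from by omega]; exact hP
          · rw [show m - 1 + 1 = m from by omega]
      · exact ⟨⟨Or.inr ⟨m, rfl, hlt, rfl⟩, hcj⟩, Or.inr rfl⟩
  have hB : {p : ℕ × ℤ | ConvexAt Y p.1 p.2 ∧ colour n p.1 p.2 = j}
        ∩ {p : ℕ × ℤ | p.1 = m ∨ p.1 = m + 1}
      = {p : ℕ × ℤ | (p = ((m : ℕ), Y.y (m-1)) ∧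
            (1 ≤ m ∧ Y.y (m-1) < Y.y m ∧ colour n m (Y.y (m-1)) = j))
          ∨ (p = ((m + 1 : ℕ), Y.y m) ∧ colour n (m+1) (Y.y m) = j)} := by
    ext ⟨a, w⟩
    simp only [Set.mem_inter_iff, Set.mem_setOf_eq, ConvexAt, Prod.mk.injEq]
    constructor
    · rintro ⟨⟨⟨r, rfl, hlt', rfl⟩, hcj⟩, hw⟩
      rcases hw with hw | hw
      · subst hw
        exact Or.inl ⟨⟨rfl, by simp⟩, by omega, by simpa using hlt', by simpa using hcj⟩
      · obtain rfl : m = r := by omega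
        exact Or.inr ⟨⟨rfl, rfl⟩, hcj⟩
    · rintro (⟨⟨ha1, rfl⟩, hm1, hplt, hcj⟩ | ⟨⟨ha1, rfl⟩, hcj⟩) <;> obtain rfl := ha1.symm
      · refine ⟨⟨⟨m - 1, by omega, ?_, rfl⟩, hcj⟩, Or.inl rfl⟩
        rw [show m - 1 + 1 = m from by omega]; exact hplt
      · exact ⟨⟨⟨m, rfl, hlt, rfl⟩, hcj⟩, Or.inr rfl⟩
  have hA' : {p : ℕ × ℤ | ConcaveAt Y' p.1 p.2 ∧ colour n p.1 p.2 = j}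
        ∩ {p : ℕ × ℤ | p.1 = m ∨ p.1 = m + 1}
      = {p : ℕ × ℤ | (p = ((m : ℕ), Y.y m + 1) ∧ colour n m (Y.y m + 1) = j)
          ∨ (p = ((m + 1 : ℕ), Y.y (m+1)) ∧
              (Y.y m + 1 < Y.y (m+1) ∧ colour n (m+1) (Y.y (m+1)) = j))} := by
    ext ⟨a, w⟩
    simp only [Set.mem_inter_iff, Set.mem_setOf_eq, ConcaveAt, Prod.mk.injEq]
    constructor
    · rintro ⟨⟨hcv, hcj⟩, hw⟩
      rcases hcv with ⟨rfl, hz0⟩ | ⟨r, rfl, hlt', hz0⟩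
      · have hm0 : m = 0 := by omega
        subst hm0
        rw [hu' 0, if_pos rfl] at hz0
        subst hz0
        exact Or.inl ⟨⟨rfl, rfl⟩, hcj⟩
      · rcases hw with hw | hw
        · subst hw
          rw [hu' (r+1), if_pos rfl] at hz0
          subst hz0
          exact Or.inl ⟨⟨rfl, rfl⟩, hcj⟩
        · obtain rfl : m = r := by omega
          rw [hu' (m+1), if_neg (by omega)] at hz0
          subst hz0
          rw [hu' m, if_pos rfl, hu' (m+1), if_neg (by omega)] at hlt'
          exact Or.inr ⟨⟨rfl, rfl⟩, hlt', hcj⟩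
    · rintro (⟨⟨ha1, rfl⟩, hcj⟩ | ⟨⟨ha1, rfl⟩, hQ2, hcj⟩) <;> obtain rfl := ha1.symm
      · refine ⟨⟨?_, hcj⟩, Or.inl rfl⟩
        rcases Nat.eq_zero_or_pos m with rfl | hm1
        · exact Or.inl ⟨rfl, by rw [hu' 0, if_pos rfl]⟩
        · refine Or.inr ⟨m - 1, by omega, ?_, ?_⟩
          · rw [show m - 1 + 1 = m from by omega, hu' (m-1),
              if_neg (show ¬(m - 1 = m) from by omega), hu' m, if_pos rfl]
            omega
          · rw [show m - 1 + 1 = m from by omega, hu' m, if_pos rfl]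
      · refine ⟨⟨Or.inr ⟨m, rfl, ?_, ?_⟩, hcj⟩, Or.inr rfl⟩
        · rw [hu' m, if_pos rfl, hu' (m+1), if_neg (by omega)]; exact hQ2
        · rw [hu' (m+1), if_neg (by omega)]
  have hB' : {p : ℕ × ℤ | ConvexAt Y' p.1 p.2 ∧ colour n p.1 p.2 = j}
        ∩ {p : ℕ × ℤ | p.1 = m ∨ p.1 = m + 1}
      = {p : ℕ × ℤ | (p = ((m : ℕ), Y.y (m-1)) ∧ (1 ≤ m ∧ colour n m (Y.y (m-1)) = j))
          ∨ (p = ((m + 1 : ℕ), Y.y m + 1) ∧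
              (Y.y m + 1 < Y.y (m+1) ∧ colour n (m+1) (Y.y m + 1) = j))} := by
    ext ⟨a, w⟩
    simp only [Set.mem_inter_iff, Set.mem_setOf_eq, ConvexAt, Prod.mk.injEq]
    constructor
    · rintro ⟨⟨⟨r, rfl, hlt', hz0⟩, hcj⟩, hw⟩
      rcases hw with hw | hw
      · subst hw
        rw [hu' r, if_neg (by omega)] at hz0
        subst hz0
        exact Or.inl ⟨⟨rfl, by simp⟩, by omega, by simpa using hcj⟩
      · obtain rfl : m = r := by omega
        rw [hu' m, if_pos rfl] at hz0
        subst hz0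
        rw [hu' m, if_pos rfl, hu' (m+1), if_neg (by omega)] at hlt'
        exact Or.inr ⟨⟨rfl, rfl⟩, hlt', hcj⟩
    · rintro (⟨⟨ha1, rfl⟩, hm1, hcj⟩ | ⟨⟨ha1, rfl⟩, hQ2, hcj⟩) <;> obtain rfl := ha1.symm
      · refine ⟨⟨⟨m - 1, by omega, ?_, ?_⟩, hcj⟩, Or.inl rfl⟩
        · rw [show m - 1 + 1 = m from by omega, hu' (m-1),
            if_neg (show ¬(m - 1 = m) from by omega), hu' m, if_pos rfl]
          omega
        · rw [hu' (m-1), if_neg (show ¬(m - 1 = m) from by omega)]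
      · refine ⟨⟨⟨m, rfl, ?_, ?_⟩, hcj⟩, Or.inr rfl⟩
        · rw [hu' m, if_pos rfl, hu' (m+1), if_neg (by omega)]; exact hQ2
        · rw [hu' m, if_pos rfl]
  -- outside the window nothing changes
  have hout1 : {p : ℕ × ℤ | ConcaveAt Y' p.1 p.2 ∧ colour n p.1 p.2 = j}
        \ {p : ℕ × ℤ | p.1 = m ∨ p.1 = m + 1}
      = {p : ℕ × ℤ | ConcaveAt Y p.1 p.2 ∧ colour n p.1 p.2 = j}
        \ {p : ℕ × ℤ | p.1 = m ∨ p.1 = m + 1} := by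
    ext ⟨a, w⟩
    simp only [Set.mem_diff, Set.mem_setOf_eq, ConcaveAt]
    constructor
    · rintro ⟨⟨hcv, hcj⟩, hw⟩
      refine ⟨⟨?_, hcj⟩, hw⟩
      rcases hcv with ⟨rfl, hz0⟩ | ⟨r, rfl, hlt', hz0⟩
      · rw [hu' 0, if_neg (by omega)] at hz0
        exact Or.inl ⟨rfl, hz0⟩
      · rw [hu' r, if_neg (by omega), hu' (r+1), if_neg (by omega)] at hlt'
        rw [hu' (r+1), if_neg (by omega)] at hz0
        exact Or.inr ⟨r, rfl, hlt', hz0⟩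
    · rintro ⟨⟨hcv, hcj⟩, hw⟩
      refine ⟨⟨?_, hcj⟩, hw⟩
      rcases hcv with ⟨rfl, hz0⟩ | ⟨r, rfl, hlt', hz0⟩
      · exact Or.inl ⟨rfl, by rw [hu' 0, if_neg (by omega)]; exact hz0⟩
      · exact Or.inr ⟨r, rfl,
          by rw [hu' r, if_neg (by omega), hu' (r+1), if_neg (by omega)]; exact hlt',
          by rw [hu' (r+1), if_neg (by omega)]; exact hz0⟩
  have hout2 : {p : ℕ × ℤ | ConvexAt Y' p.1 p.2 ∧ colour n p.1 p.2 = j}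
        \ {p : ℕ × ℤ | p.1 = m ∨ p.1 = m + 1}
      = {p : ℕ × ℤ | ConvexAt Y p.1 p.2 ∧ colour n p.1 p.2 = j}
        \ {p : ℕ × ℤ | p.1 = m ∨ p.1 = m + 1} := by
    ext ⟨a, w⟩
    simp only [Set.mem_diff, Set.mem_setOf_eq, ConvexAt]
    constructor
    · rintro ⟨⟨⟨r, rfl, hlt', hz0⟩, hcj⟩, hw⟩
      rw [hu' r, if_neg (by omega), hu' (r+1), if_neg (by omega)] at hlt'
      rw [hu' r, if_neg (by omega)] at hz0
      exact ⟨⟨⟨r, rfl, hlt', hz0⟩, hcj⟩, hw⟩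
    · rintro ⟨⟨⟨r, rfl, hlt', hz0⟩, hcj⟩, hw⟩
      refine ⟨⟨⟨r, rfl, ?_, ?_⟩, hcj⟩, hw⟩
      · rw [hu' r, if_neg (by omega), hu' (r+1), if_neg (by omega)]; exact hlt'
      · rw [hu' r, if_neg (by omega)]; exact hz0
  -- finiteness and splitting along the window
  have hfin1 := finite_concave Y {p : ℕ × ℤ | ConcaveAt Y p.1 p.2 ∧ colour n p.1 p.2 = j}
    (fun p hp => hp.1)
  have hfin2 := finite_convex Y {p : ℕ × ℤ | ConvexAt Y p.1 p.2 ∧ colour n p.1 p.2 = j}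
    (fun p hp => hp.1)
  have hfin3 := finite_concave Y' {p : ℕ × ℤ | ConcaveAt Y' p.1 p.2 ∧ colour n p.1 p.2 = j}
    (fun p hp => hp.1)
  have hfin4 := finite_convex Y' {p : ℕ × ℤ | ConvexAt Y' p.1 p.2 ∧ colour n p.1 p.2 = j}
    (fun p hp => hp.1)
  have g1 : cc j Y' = _ :=
    (Set.ncard_inter_add_ncard_diff_eq_ncard _ {p : ℕ × ℤ | p.1 = m ∨ p.1 = m + 1} hfin3).symm
  have g2 : cx j Y' = _ :=
    (Set.ncard_inter_add_ncard_diff_eq_ncard _ {p : ℕ × ℤ | p.1 = m ∨ p.1 = m + 1} hfin4).symm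
  have g3 : cc j Y = _ :=
    (Set.ncard_inter_add_ncard_diff_eq_ncard _ {p : ℕ × ℤ | p.1 = m ∨ p.1 = m + 1} hfin1).symm
  have g4 : cx j Y = _ :=
    (Set.ncard_inter_add_ncard_diff_eq_ncard _ {p : ℕ × ℤ | p.1 = m ∨ p.1 = m + 1} hfin2).symm
  rw [hout1, hA', ncard_two _ _ (hne _ _)] at g1
  rw [hout2, hB', ncard_two _ _ (hne _ _)] at g2
  rw [hA, ncard_two _ _ (hne _ _)] at g3
  rw [hB, ncard_two _ _ (hne _ _)] at g4
  rw [g1, g2, g3, g4, hcol, hci, ← hkey]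
  clear g1 g2 g3 g4 hA hB hA' hB' hout1 hout2 hfin1 hfin2 hfin3 hfin4 hu' hY' hne hkey hci hcol
  push_cast
  by_cases hQ2 : Y.y m + 1 < Y.y (m+1)
  · simp only [hQ2, true_and]
    by_cases hm0 : m = 0
    · subst hm0
      split_ifs <;> omega
    · by_cases hP2 : Y.y (m-1) < Y.y m
      · split_ifs <;> omega
      · have he2 : Y.y (m - 1) = Y.y m := le_antisymm hmono (by omega)
        rw [he2]
        split_ifs <;> omega
  · have heq : Y.y (m+1) = Y.y m + 1 := by omega
    rw [heq]
    by_cases hm0 : m = 0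
    · subst hm0
      split_ifs <;> omega
    · by_cases hP2 : Y.y (m-1) < Y.y m
      · split_ifs <;> omega
      · have he2 : Y.y (m - 1) = Y.y m := le_antisymm hmono (by omega)
        rw [he2]
        split_ifs <;> omega


end
end

section
/- Let (l,y) be a site of colour i and (l₁,y₁) a site of colour j with (l₁,y₁) ≠ (l−1, y+1), and let Y be a Young diagram of charge k having a convex corner at (l,y) and a concave corner at (l₁,y₁). If either a_{ij} = 0 and i ≠ j, or (l₁,y₁) < (l,y), then a(i,l,y, F_{(l₁,y₁)}Y) = a(i,l,y, Y) and b(j,l₁,y₁, Y) = b(j,l₁,y₁, E_{(l,y)}Y), where F_{(l₁,y₁)}Y is Y with a box added at the concave corner at (l₁,y₁) and E_{(l,y)}Y is Y with the convex corner at (l,y) removed. -/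
open scoped Classical

noncomputable section

variable {n k : ℕ}

section AuxStatement9

variable {n k : ℕ}

lemma concaveAt_y_eq' {Y : YD n k} {l : ℕ} {z : ℤ} (h : ConcaveAt Y l z) : Y.y l = z := by
  rcases h with ⟨h0, hz⟩ | ⟨m, hm, _, hz⟩
  · subst h0; exact hz.symm
  · subst hm; exact hz.symm

lemma concaveAt_update' {Y Y' : YD n k} {t : ℕ} {v : ℤ}
    (hY : Y'.y = Function.update Y.y t v) {m : ℕ} {w : ℤ}
    (hfar : (m:ℤ) + w < (t:ℤ) + min v (Y.y t) ∨ (t:ℤ) + max v (Y.y t) + 1 < (m:ℤ) + w)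
    (h : ConcaveAt Y m w) : ConcaveAt Y' m w := by
  have hmin1 : min v (Y.y t) ≤ v := min_le_left _ _
  have hmin2 : min v (Y.y t) ≤ Y.y t := min_le_right _ _
  have hmax1 : v ≤ max v (Y.y t) := le_max_left _ _
  have hmax2 : Y.y t ≤ max v (Y.y t) := le_max_right _ _
  rcases h with ⟨h0, hw⟩ | ⟨r, hm, hlt, hw⟩
  · subst h0
    refine Or.inl ⟨rfl, ?_⟩
    rw [hY]
    rcases eq_or_ne t 0 with rfl | ht
    · exfalso; subst hw; omega
    · rw [Function.update_of_ne (Ne.symm ht)]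
      exact hw
  · subst hm
    rcases eq_or_ne r t with rfl | hrt
    · have hne : r + 1 ≠ r := by omega
      refine Or.inr ⟨r, rfl, ?_, ?_⟩
      · rw [hY, Function.update_self, Function.update_of_ne hne]
        by_contra hcon
        push_neg at hcon
        subst hw
        omega
      · rw [hY, Function.update_of_ne hne]; exact hw
    · rcases eq_or_ne (r + 1) t with ht | ht
      · exfalso
        subst ht
        subst hw
        omega
      · refine Or.inr ⟨r, rfl, ?_, ?_⟩
        · rw [hY, Function.update_of_ne hrt, Function.update_of_ne ht]; exact hlt
        · rw [hY, Function.update_of_ne ht]; exact hw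

lemma convexAt_update' {Y Y' : YD n k} {t : ℕ} {v : ℤ}
    (hY : Y'.y = Function.update Y.y t v) {m : ℕ} {w : ℤ}
    (hfar : (m:ℤ) + w < (t:ℤ) + min v (Y.y t) ∨ (t:ℤ) + max v (Y.y t) + 1 < (m:ℤ) + w)
    (h : ConvexAt Y m w) : ConvexAt Y' m w := by
  have hmin1 : min v (Y.y t) ≤ v := min_le_left _ _
  have hmin2 : min v (Y.y t) ≤ Y.y t := min_le_right _ _
  have hmax1 : v ≤ max v (Y.y t) := le_max_left _ _
  have hmax2 : Y.y t ≤ max v (Y.y t) := le_max_right _ _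
  obtain ⟨r, hm, hlt, hw⟩ := h
  subst hm
  rcases eq_or_ne r t with rfl | hrt
  · exfalso
    subst hw
    omega
  · rcases eq_or_ne (r + 1) t with ht | ht
    · subst ht
      refine ⟨r, rfl, ?_, ?_⟩
      · rw [hY, Function.update_of_ne hrt, Function.update_self]
        by_contra hcon
        push_neg at hcon
        subst hw
        omega
      · rw [hY, Function.update_of_ne hrt]; exact hw
    · refine ⟨r, rfl, ?_, ?_⟩
      · rw [hY, Function.update_of_ne hrt, Function.update_of_ne ht]; exact hlt
      · rw [hY, Function.update_of_ne hrt]; exact hw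

lemma yd_update_symm' {Y Y' : YD n k} {t : ℕ} {v : ℤ}
    (hY : Y'.y = Function.update Y.y t v) :
    Y.y = Function.update Y'.y t (Y.y t) := by
  funext r
  rcases eq_or_ne r t with rfl | h
  · rw [Function.update_self]
  · rw [Function.update_of_ne h, hY, Function.update_of_ne h]

lemma concaveAt_update_iff' {Y Y' : YD n k} {t : ℕ} {v : ℤ}
    (hY : Y'.y = Function.update Y.y t v) {m : ℕ} {w : ℤ}
    (hfar : (m:ℤ) + w < (t:ℤ) + min v (Y.y t) ∨ (t:ℤ) + max v (Y.y t) + 1 < (m:ℤ) + w) :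
    ConcaveAt Y' m w ↔ ConcaveAt Y m w := by
  have hv' : Y'.y t = v := by rw [hY, Function.update_self]
  constructor
  · intro h
    refine concaveAt_update' (yd_update_symm' hY) ?_ h
    rw [hv', min_comm, max_comm]
    exact hfar
  · exact concaveAt_update' hY hfar

lemma convexAt_update_iff' {Y Y' : YD n k} {t : ℕ} {v : ℤ}
    (hY : Y'.y = Function.update Y.y t v) {m : ℕ} {w : ℤ}
    (hfar : (m:ℤ) + w < (t:ℤ) + min v (Y.y t) ∨ (t:ℤ) + max v (Y.y t) + 1 < (m:ℤ) + w) :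
    ConvexAt Y' m w ↔ ConvexAt Y m w := by
  have hv' : Y'.y t = v := by rw [hY, Function.update_self]
  constructor
  · intro h
    refine convexAt_update' (yd_update_symm' hY) ?_ h
    rw [hv', min_comm, max_comm]
    exact hfar
  · exact convexAt_update' hY hfar

lemma colour_def' (n l : ℕ) (z : ℤ) :
    colour n l z = if (((l : ℤ) + z) % (2 * (n : ℤ))).toNat ≤ n
      then (((l : ℤ) + z) % (2 * (n : ℤ))).toNat
      else 2 * n - (((l : ℤ) + z) % (2 * (n : ℤ))).toNat := rfl

lemma colour_eq_of_sum_eq' {n l l' : ℕ} {z z' : ℤ} (h : (l:ℤ) + z = (l':ℤ) + z') :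
    colour n l z = colour n l' z' := by
  rw [colour_def', colour_def', h]

lemma colour_adj' {n : ℕ} (hn : 1 ≤ n) {l l' : ℕ} {z z' : ℤ}
    (h : (l:ℤ) + z + 1 = (l':ℤ) + z') :
    colour n l z + 1 = colour n l' z' ∨ colour n l' z' + 1 = colour n l z := by
  have h2n : (0:ℤ) < 2 * (n:ℤ) := by omega
  set s : ℤ := (l:ℤ) + z with hs
  have hr0 : 0 ≤ s % (2 * (n:ℤ)) := Int.emod_nonneg s (by omega)
  have hr1 : s % (2 * (n:ℤ)) < 2 * (n:ℤ) := Int.emod_lt_of_pos s h2n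
  have e : (l':ℤ) + z' = (s % (2 * (n:ℤ)) + 1) + (2 * (n:ℤ)) * (s / (2 * (n:ℤ))) := by
    have h1 := Int.mul_ediv_add_emod s (2 * (n:ℤ))
    linarith [h1]
  have hmod : ((l':ℤ) + z') % (2 * (n:ℤ)) = (s % (2 * (n:ℤ)) + 1) % (2 * (n:ℤ)) := by
    rw [e, Int.add_mul_emod_self_left]
  rcases lt_or_eq_of_le (by omega : s % (2 * (n:ℤ)) + 1 ≤ 2 * (n:ℤ)) with hlt | heq
  · have hmod2 : (s % (2 * (n:ℤ)) + 1) % (2 * (n:ℤ)) = s % (2 * (n:ℤ)) + 1 :=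
      Int.emod_eq_of_lt (by omega) hlt
    rw [colour_def', colour_def', ← hs, hmod, hmod2]
    split_ifs <;> omega
  · have hmod2 : (s % (2 * (n:ℤ)) + 1) % (2 * (n:ℤ)) = 0 := by
      rw [heq, Int.emod_self]
    rw [colour_def', colour_def', ← hs, hmod, hmod2]
    split_ifs <;> omega

lemma cartan_zero' {n i j : ℕ} (h : cartan n i j = 0) :
    i ≠ j ∧ i + 1 ≠ j ∧ j + 1 ≠ i := by
  unfold cartan at h
  split_ifs at h <;> omega

end AuxStatement9

/-- Let `(l,z)` be a site of colour `i` and `(l₁,z₁)` a site of colour `j` with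
`(l₁,z₁) ≠ (l-1, z+1)`, and let `Y` have a convex corner at `(l,z)` and a concave corner at
`(l₁,z₁)`. If `a_{ij} = 0` and `i ≠ j`, or `(l₁,z₁) < (l,z)`, then
`a(i,l,z, F_{(l₁,z₁)}Y) = a(i,l,z,Y)` and `b(j,l₁,z₁,Y) = b(j,l₁,z₁, E_{(l,z)}Y)`. -/
theorem aExp_bExp_unchanged (n : ℕ) (hn : 2 ≤ n) (k i j l l₁ : ℕ) (z z₁ : ℤ)
    (hk : k ≤ n) (hi : i ≤ n) (hj : j ≤ n)
    (hci : colour n l z = i) (hcj : colour n l₁ z₁ = j)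
    (hne : ¬(l₁ + 1 = l ∧ z₁ = z + 1))
    (Y : YD n k) (hx : ConvexAt Y l z) (hc : ConcaveAt Y l₁ z₁)
    (hcase : (cartan n i j = 0 ∧ i ≠ j) ∨ (l₁ : ℤ) + z₁ < (l : ℤ) + z) :
    aExp i l z (addY Y l₁ z₁ hc) = aExp i l z Y ∧
    bExp j l₁ z₁ Y = bExp j l₁ z₁ (removeY Y l z hx) := by
  obtain ⟨m0, hl, hlt0, hz⟩ := id hx
  have hy1 : Y.y l₁ = z₁ := concaveAt_y_eq' hc
  have hn1 : 1 ≤ n := by omega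
  have key1 : ∀ (m : ℕ) (w : ℤ), colour n m w = i → (l:ℤ) + z < (m:ℤ) + w →
      ((m:ℤ) + w < (l₁:ℤ) + min (Y.y l₁ - 1) (Y.y l₁) ∨
        (l₁:ℤ) + max (Y.y l₁ - 1) (Y.y l₁) + 1 < (m:ℤ) + w) := by
    intro m w hcol hgt
    rw [hy1]
    have hminx : min (z₁ - 1) z₁ = z₁ - 1 := min_eq_left (by omega)
    have hmaxx : max (z₁ - 1) z₁ = z₁ := max_eq_right (by omega)
    rw [hminx, hmaxx]
    rcases hcase with ⟨hcar, hij⟩ | hSlt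
    · by_contra hcon
      push_neg at hcon
      have h3 := cartan_zero' hcar
      have htri : (m:ℤ) + w = (l₁:ℤ) + z₁ - 1 ∨ (m:ℤ) + w = (l₁:ℤ) + z₁ ∨
          (m:ℤ) + w = (l₁:ℤ) + z₁ + 1 := by omega
      rcases htri with h | h | h
      · rcases colour_adj' hn1 (show (m:ℤ) + w + 1 = (l₁:ℤ) + z₁ by omega) with h' | h' <;>
          rw [hcol, hcj] at h' <;> omega
      · have := colour_eq_of_sum_eq' (n := n) h
        rw [hcol, hcj] at this; omega
      · rcases colour_adj' hn1 (show (l₁:ℤ) + z₁ + 1 = (m:ℤ) + w by omega) with h' | h' <;>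
          rw [hcj, hcol] at h' <;> omega
    · omega
  have key2 : ∀ (m : ℕ) (w : ℤ), colour n m w = j → (m:ℤ) + w < (l₁:ℤ) + z₁ →
      ((m:ℤ) + w < (m0:ℤ) + min (Y.y m0 + 1) (Y.y m0) ∨
        (m0:ℤ) + max (Y.y m0 + 1) (Y.y m0) + 1 < (m:ℤ) + w) := by
    intro m w hcol hltS
    rw [← hz]
    have hminx : min (z + 1) z = z := min_eq_right (by omega)
    have hmaxx : max (z + 1) z = z + 1 := max_eq_left (by omega)
    rw [hminx, hmaxx]
    have hlm : (l:ℤ) = (m0:ℤ) + 1 := by omega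
    rcases hcase with ⟨hcar, hij⟩ | hSlt
    · by_contra hcon
      push_neg at hcon
      have h3 := cartan_zero' hcar
      have htri : (m:ℤ) + w = (l:ℤ) + z - 1 ∨ (m:ℤ) + w = (l:ℤ) + z ∨
          (m:ℤ) + w = (l:ℤ) + z + 1 := by omega
      rcases htri with h | h | h
      · rcases colour_adj' hn1 (show (m:ℤ) + w + 1 = (l:ℤ) + z by omega) with h' | h' <;>
          rw [hcol, hci] at h' <;> omega
      · have := colour_eq_of_sum_eq' (n := n) h
        rw [hcol, hci] at this; omega
      · rcases colour_adj' hn1 (show (l:ℤ) + z + 1 = (m:ℤ) + w by omega) with h' | h' <;>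
          rw [hci, hcol] at h' <;> omega
    · omega
  have hYa : (addY Y l₁ z₁ hc).y = Function.update Y.y l₁ (Y.y l₁ - 1) := rfl
  have hl1 : l - 1 = m0 := by omega
  have hYr : (removeY Y l z hx).y = Function.update Y.y m0 (Y.y m0 + 1) := by
    show Function.update Y.y (l - 1) (Y.y (l - 1) + 1) = _
    rw [hl1]
  constructor
  · have hs1 : {p : ℕ × ℤ | ConcaveAt (addY Y l₁ z₁ hc) p.1 p.2 ∧ colour n p.1 p.2 = i ∧
        (l : ℤ) + z < (p.1 : ℤ) + p.2} =
        {p : ℕ × ℤ | ConcaveAt Y p.1 p.2 ∧ colour n p.1 p.2 = i ∧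
        (l : ℤ) + z < (p.1 : ℤ) + p.2} := by
      ext ⟨m, w⟩
      simp only [Set.mem_setOf_eq]
      constructor
      · rintro ⟨h1, h2, h3⟩
        exact ⟨(concaveAt_update_iff' hYa (key1 m w h2 h3)).mp h1, h2, h3⟩
      · rintro ⟨h1, h2, h3⟩
        exact ⟨(concaveAt_update_iff' hYa (key1 m w h2 h3)).mpr h1, h2, h3⟩
    have hs2 : {p : ℕ × ℤ | ConvexAt (addY Y l₁ z₁ hc) p.1 p.2 ∧ colour n p.1 p.2 = i ∧
        (l : ℤ) + z < (p.1 : ℤ) + p.2} =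
        {p : ℕ × ℤ | ConvexAt Y p.1 p.2 ∧ colour n p.1 p.2 = i ∧
        (l : ℤ) + z < (p.1 : ℤ) + p.2} := by
      ext ⟨m, w⟩
      simp only [Set.mem_setOf_eq]
      constructor
      · rintro ⟨h1, h2, h3⟩
        exact ⟨(convexAt_update_iff' hYa (key1 m w h2 h3)).mp h1, h2, h3⟩
      · rintro ⟨h1, h2, h3⟩
        exact ⟨(convexAt_update_iff' hYa (key1 m w h2 h3)).mpr h1, h2, h3⟩
    unfold aExp
    rw [hs1, hs2]
  · have hs3 : {p : ℕ × ℤ | ConvexAt (removeY Y l z hx) p.1 p.2 ∧ colour n p.1 p.2 = j ∧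
        (p.1 : ℤ) + p.2 < (l₁ : ℤ) + z₁} =
        {p : ℕ × ℤ | ConvexAt Y p.1 p.2 ∧ colour n p.1 p.2 = j ∧
        (p.1 : ℤ) + p.2 < (l₁ : ℤ) + z₁} := by
      ext ⟨m, w⟩
      simp only [Set.mem_setOf_eq]
      constructor
      · rintro ⟨h1, h2, h3⟩
        exact ⟨(convexAt_update_iff' hYr (key2 m w h2 h3)).mp h1, h2, h3⟩
      · rintro ⟨h1, h2, h3⟩
        exact ⟨(convexAt_update_iff' hYr (key2 m w h2 h3)).mpr h1, h2, h3⟩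
    have hs4 : {p : ℕ × ℤ | ConcaveAt (removeY Y l z hx) p.1 p.2 ∧ colour n p.1 p.2 = j ∧
        (p.1 : ℤ) + p.2 < (l₁ : ℤ) + z₁} =
        {p : ℕ × ℤ | ConcaveAt Y p.1 p.2 ∧ colour n p.1 p.2 = j ∧
        (p.1 : ℤ) + p.2 < (l₁ : ℤ) + z₁} := by
      ext ⟨m, w⟩
      simp only [Set.mem_setOf_eq]
      constructor
      · rintro ⟨h1, h2, h3⟩
        exact ⟨(concaveAt_update_iff' hYr (key2 m w h2 h3)).mp h1, h2, h3⟩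
      · rintro ⟨h1, h2, h3⟩
        exact ⟨(concaveAt_update_iff' hYr (key2 m w h2 h3)).mpr h1, h2, h3⟩
    unfold bExp
    rw [hs3, hs4]


end
end
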